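/- Under the standing hypotheses, assume R is a central β-Galois algebra over R^β. If R satisfies the fundamental theorem, then for any subalgebra S of R that is separable over R^β: V_R(S) = ⊕_{g∈H_S} J_g and S = ⊕_{g∈H_{S'}} J_g, where S' = V_R(S). -/

import Mathlib

open scoped BigOperators

attribute [local instance] Classical.propDecidable

universe u v w

/-- A groupoid in the sense of Lawson: a (nonempty) set `G` with a partially defined
binary operation (here totalized: `mul g h` is only meaningful when `d g = r h`),
inverses, and one-sided identities `r g = g * g⁻¹` and `d g = g⁻¹ * g`. -/
structure Gpd (G : Type*) where
  d : G → G
  r : G → G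
  mul : G → G → G
  inv : G → G
  assoc : ∀ g h l, d g = r h → d h = r l → mul (mul g h) l = mul g (mul h l)
  d_mul : ∀ g h, d g = r h → d (mul g h) = d h
  r_mul : ∀ g h, d g = r h → r (mul g h) = r g
  d_inv : ∀ g, d (inv g) = r g
  r_inv : ∀ g, r (inv g) = d g
  inv_inv : ∀ g, inv (inv g) = g
  mul_inv : ∀ g, mul g (inv g) = r g
  inv_mul : ∀ g, mul (inv g) g = d g
  mul_d : ∀ g, mul g (d g) = g
  r_mul_self : ∀ g, mul (r g) g = g
  d_d : ∀ g, d (d g) = d g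
  r_d : ∀ g, r (d g) = d g
  inv_d : ∀ g, inv (d g) = d g

namespace Gpd

variable {G : Type*} (gpd : Gpd G)

/-- The set `G₀` of identities of the groupoid. -/
def idts : Set G := Set.range gpd.d

/-- `H` is a subgroupoid: a nonempty subset closed under inverses and under all
defined products. -/
def IsSubgpd (H : Set G) : Prop :=
  H.Nonempty ∧ (∀ g ∈ H, gpd.inv g ∈ H) ∧
    ∀ g ∈ H, ∀ h ∈ H, gpd.d g = gpd.r h → gpd.mul g h ∈ H

/-- A wide subgroupoid: a subgroupoid containing all the identities of `G`. -/
def IsWide (H : Set G) : Prop := gpd.IsSubgpd H ∧ gpd.idts ⊆ H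

/-- The subgroupoid generated by a subset `X` of `G`: the intersection of all
subgroupoids containing `X`. -/
def gen (X : Set G) : Set G := ⋂₀ {H : Set G | gpd.IsSubgpd H ∧ X ⊆ H}

end Gpd

/-- A unital action `β` of a groupoid `gpd` on a `K`-algebra `R`.  Each ideal
`E_g = E_{r g}` is the unital ideal `R·(one g)` generated by the central idempotent
`one g` (the identity element `1_g` of `E_g`), and `act g` encodes the `K`-algebra
isomorphism `β_g : E_{g⁻¹} → E_g` (only the values `act g (x * one (inv g))` on
`E_{g⁻¹}` are relevant). -/
structure GpdAct (K : Type*) [CommRing K] (R : Type*) [Ring R] [Algebra K R]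
    {G : Type*} (gpd : Gpd G) where
  one : G → R
  one_central : ∀ g x, one g * x = x * one g
  one_idem : ∀ g, one g * one g = one g
  one_r : ∀ g, one g = one (gpd.r g)
  act : G → R → R
  act_mem : ∀ g x, act g (x * one (gpd.inv g)) * one g = act g (x * one (gpd.inv g))
  act_add : ∀ g x y, act g ((x + y) * one (gpd.inv g)) =
      act g (x * one (gpd.inv g)) + act g (y * one (gpd.inv g))
  act_mul : ∀ g x y, act g (x * y * one (gpd.inv g)) =
      act g (x * one (gpd.inv g)) * act g (y * one (gpd.inv g))
  act_smul : ∀ g (k : K) (x : R),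
      act g (k • x * one (gpd.inv g)) = k • act g (x * one (gpd.inv g))
  act_unit : ∀ g, act g (one (gpd.inv g)) = one g
  act_id : ∀ g x, act (gpd.d g) (x * one (gpd.d g)) = x * one (gpd.d g)
  act_comp : ∀ g h x, gpd.d g = gpd.r h →
      act g (act h (x * one (gpd.inv h)) * one (gpd.inv g)) =
        act (gpd.mul g h) (x * one (gpd.inv h))

section Defs

variable {K : Type*} [CommRing K] {R : Type*} [Ring R] [Algebra K R]
  {G : Type*} (gpd : Gpd G) (β : GpdAct K R gpd)

/-- The invariants `R^{β_H}` of `R` under the restriction of the action to a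
subset `H` of `G`: all `x` with `β_h(x 1_{h⁻¹}) = x 1_h` for all `h ∈ H`. -/
def fixedSet (H : Set G) : Set R :=
  {x : R | ∀ h ∈ H, β.act h (x * β.one (gpd.inv h)) = x * β.one h}

/-- `J_g = {t ∈ E_g | t β_g(x 1_{g⁻¹}) = x t for all x ∈ R}`. -/
def Jset (g : G) : Set R :=
  {t : R | t * β.one g = t ∧ ∀ x : R, t * β.act g (x * β.one (gpd.inv g)) = x * t}

/-- `H_S = {g ∈ G | β_g(s 1_{g⁻¹}) = s 1_g for all s ∈ S}`. -/
def Hset (S : Set R) : Set G :=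
  {g : G | ∀ s ∈ S, β.act g (s * β.one (gpd.inv g)) = s * β.one g}

/-- `R = ⊕_{e ∈ G₀} E_e`, i.e. the identity elements of the ideals `E_e`, `e ∈ G₀`,
are pairwise orthogonal central idempotents summing to `1`. -/
def IsDecomp [Fintype G] : Prop :=
  (∑ e : G, if e ∈ gpd.idts then β.one e else 0) = 1 ∧
    ∀ e f : G, e ∈ gpd.idts → f ∈ gpd.idts → e ≠ f → β.one e * β.one f = 0

/-- `R` is a `β`-Galois extension of `R^β`: there is a Galois coordinate system
`x_i, y_i` with `Σ_i x_i β_g(y_i 1_{g⁻¹}) = δ_{e,g} 1_e` for all `e ∈ G₀`, `g ∈ G`. -/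
def IsGaloisExt [Fintype G] : Prop :=
  ∃ (n : ℕ) (x y : Fin n → R), ∀ g : G,
    (∑ i, x i * β.act g (y i * β.one (gpd.inv g))) = if g ∈ gpd.idts then β.one g else 0

/-- `V = ⊕_{g ∈ H} J_g`: every family `(f g)_{g ∈ H}` with `f g ∈ J_g` sums into `V`,
and every element of `V` is in a unique way such a sum (internal direct sum). -/
def IsDirectSumOver [Fintype G] (H : Set G) (V : Set R) : Prop :=
  (∀ f : G → R, (∀ g, f g ∈ Jset gpd β g) → (∀ g, g ∉ H → f g = 0) → (∑ g, f g) ∈ V) ∧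
    ∀ v ∈ V, ∃! f : G → R,
      (∀ g, f g ∈ Jset gpd β g) ∧ (∀ g, g ∉ H → f g = 0) ∧ v = ∑ g, f g

/-- `γ(H) = ⊕_{h ∈ H} J_h`, as the set of all sums `Σ_{h ∈ H} j_h`, `j_h ∈ J_h`. -/
def gammaSet [Fintype G] (H : Set G) : Set R :=
  {v : R | ∃ f : G → R,
    (∀ g, f g ∈ Jset gpd β g) ∧ (∀ g, g ∉ H → f g = 0) ∧ v = ∑ g, f g}

/-- The product `J_h J_g`: all finite sums of products `a b` with `a ∈ J_h`, `b ∈ J_g`. -/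
def JprodSet (h g : G) : Set R :=
  {z : R | ∃ (n : ℕ) (a b : Fin n → R),
    (∀ i, a i ∈ Jset gpd β h) ∧ (∀ i, b i ∈ Jset gpd β g) ∧ z = ∑ i, a i * b i}

end Defs

section Sep

variable {R : Type u} [Ring R]

/-- A biadditive pairing `φ : R × R → N` is `S`-balanced if `φ(u s, v) = φ(u, s v)`
for all `s ∈ S`.  Such pairings are exactly the additive maps out of `R ⊗_S R`,
so they detect equality in `R ⊗_S R`. -/
def IsBalanced (S : Set R) {N : Type v} [AddCommGroup N] (φ : R →+ R →+ N) : Prop :=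
  ∀ u v s : R, s ∈ S → φ (u * s) v = φ u (s * v)

/-- `R` is a separable extension of the subring `S ⊆ R`: there is
`z = Σ_i x_i ⊗ y_i ∈ R ⊗_S R` with `Σ_i x_i y_i = 1` and `a z = z a` for all `a ∈ R`
(the latter expressed via all `S`-balanced pairings, which detect equality in
`R ⊗_S R`). -/
def RSepOver (S : Set R) : Prop :=
  ∃ (n : ℕ) (x y : Fin n → R), (∑ i, x i * y i) = 1 ∧
    ∀ (N : Type v) [AddCommGroup N] (φ : R →+ R →+ N), IsBalanced S φ →
      ∀ a : R, (∑ i, φ (a * x i) (y i)) = ∑ i, φ (x i) (y i * a)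

/-- `R` is a Hirata separable extension of `S`: `R ⊗_S R` is isomorphic as an
`R`-bimodule to a direct summand of a finite direct sum of copies of `R`.
Equivalently (Casimir elements): there are `R`-central elements
`e_k = Σ_i x_{k,i} ⊗ y_{k,i} ∈ (R ⊗_S R)^R` and `a_k ∈ V_R(S)` with
`Σ_k a_k e_k = 1 ⊗ 1` (centrality and the last equation expressed via all
`S`-balanced pairings, which detect equality in `R ⊗_S R`). -/
def HirataSep (S : Set R) : Prop :=
  ∃ (n m : ℕ) (x y : Fin n → Fin m → R) (a : Fin n → R),
    (∀ k, a k ∈ Set.centralizer S) ∧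
    ∀ (N : Type v) [AddCommGroup N] (φ : R →+ R →+ N), IsBalanced S φ →
      (∀ (k : Fin n) (r : R),
        (∑ i, φ (r * x k i) (y k i)) = ∑ i, φ (x k i) (y k i * r)) ∧
      (∑ k, ∑ i, φ (a k * x k i) (y k i)) = φ 1 1

/-- The subring `A` of `R` is a separable extension of the subring `S ⊆ A`:
there is `z = Σ_i x_i ⊗ y_i ∈ A ⊗_S A` with `Σ_i x_i y_i = 1` and `a z = z a`
for all `a ∈ A`. -/
def SubSepOver (A : Subring R) (S : Set R) : Prop :=
  ∃ (n : ℕ) (x y : Fin n → A), (∑ i, (x i : R) * (y i : R)) = 1 ∧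
    ∀ (N : Type v) [AddCommGroup N] (φ : A →+ A →+ N),
      (∀ u v s : A, (s : R) ∈ S → φ (u * s) v = φ u (s * v)) →
      ∀ a : A, (∑ i, φ (a * x i) (y i)) = ∑ i, φ (x i) (y i * a)

end Sep

/-- `R` satisfies the fundamental theorem: the Galois map `θ : H ↦ R^{β_H}` is a
bijection from the set of wide subgroupoids of `G` onto the set of subalgebras of
`R` which are separable over `R^β`. -/
def SatisfiesFT {K : Type*} [CommRing K] {R : Type u} [Ring R] [Algebra K R]
    {G : Type*} [Fintype G] (gpd : Gpd G) (β : GpdAct K R gpd) : Prop :=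
  (∀ H : Set G, gpd.IsWide H → ∃ A : Subring R, (A : Set R) = fixedSet gpd β H ∧
      fixedSet gpd β Set.univ ⊆ (A : Set R) ∧
      SubSepOver.{u, v} A (fixedSet gpd β Set.univ)) ∧
  (∀ H L : Set G, gpd.IsWide H → gpd.IsWide L →
      fixedSet gpd β H = fixedSet gpd β L → H = L) ∧
  (∀ A : Subring R, fixedSet gpd β Set.univ ⊆ (A : Set R) →
      SubSepOver.{u, v} A (fixedSet gpd β Set.univ) →
      ∃ H : Set G, gpd.IsWide H ∧ fixedSet gpd β H = (A : Set R))


/-! ### Auxiliary development -/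

namespace StGal
set_option linter.unusedSectionVars false

open Finset

section GpdLemmas

variable {G : Type*} (gpd : Gpd G)

lemma d_mem_idts (g : G) : gpd.d g ∈ gpd.idts := ⟨g, rfl⟩

lemma r_mem_idts (g : G) : gpd.r g ∈ gpd.idts := ⟨gpd.inv g, gpd.d_inv g⟩

variable {gpd}

lemma d_of_idts {e : G} (he : e ∈ gpd.idts) : gpd.d e = e := by
  obtain ⟨a, rfl⟩ := he; exact gpd.d_d a

lemma r_of_idts {e : G} (he : e ∈ gpd.idts) : gpd.r e = e := by
  obtain ⟨a, rfl⟩ := he; exact gpd.r_d a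

lemma inv_of_idts {e : G} (he : e ∈ gpd.idts) : gpd.inv e = e := by
  obtain ⟨a, rfl⟩ := he; exact gpd.inv_d a

lemma idts_unique {e f : G} (he : e ∈ gpd.idts) (hf : f ∈ gpd.idts)
    (h : gpd.r e = gpd.r f) : e = f := by
  rw [r_of_idts he, r_of_idts hf] at h; exact h

lemma invMulCancel {g h : G} (hc : gpd.d g = gpd.r h) :
    gpd.mul (gpd.inv g) (gpd.mul g h) = h := by
  rw [← gpd.assoc _ _ _ (gpd.d_inv g) hc, gpd.inv_mul, hc, gpd.r_mul_self]

lemma mulInvCancel {g h : G} (hc : gpd.r g = gpd.r h) :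
    gpd.mul g (gpd.mul (gpd.inv g) h) = h := by
  have h1 : gpd.d (gpd.inv g) = gpd.r h := by rw [gpd.d_inv]; exact hc
  rw [← gpd.assoc _ _ _ (gpd.r_inv g).symm h1, gpd.mul_inv, hc, gpd.r_mul_self]

lemma eq_of_invMul_idts {g h : G} (hc : gpd.r g = gpd.r h)
    (hid : gpd.mul (gpd.inv g) h ∈ gpd.idts) : h = g := by
  have h1 : gpd.d (gpd.inv g) = gpd.r h := by rw [gpd.d_inv]; exact hc
  have h2 : gpd.mul (gpd.inv g) h = gpd.d g := by
    have h3 : gpd.mul (gpd.inv g) h = gpd.r (gpd.mul (gpd.inv g) h) :=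
      (r_of_idts hid).symm
    rw [h3, gpd.r_mul _ _ h1, gpd.r_inv]
  have h4 := mulInvCancel (gpd := gpd) hc
  rw [h2, gpd.mul_d] at h4
  exact h4.symm

lemma eq_d_of_mul_eq {g h : G} (hc : gpd.d h = gpd.r g) (he : gpd.mul h g = h) :
    g = gpd.d h := by
  have h4 := invMulCancel (gpd := gpd) hc
  rw [he, gpd.inv_mul] at h4
  exact h4.symm

lemma inv_mul_rev {a b : G} (hc : gpd.d a = gpd.r b) :
    gpd.inv (gpd.mul a b) = gpd.mul (gpd.inv b) (gpd.inv a) := by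
  set c := gpd.mul a b with hcdef
  set w := gpd.mul (gpd.inv b) (gpd.inv a) with hwdef
  have hdc : gpd.d c = gpd.d b := gpd.d_mul a b hc
  have hrc : gpd.r c = gpd.r a := gpd.r_mul a b hc
  have hria : gpd.r (gpd.inv a) = gpd.r b := by rw [gpd.r_inv, hc]
  have hrw : gpd.r w = gpd.d b := by
    rw [hwdef, gpd.r_mul _ _ (by rw [gpd.d_inv, hria]), gpd.r_inv]
  have hcw : gpd.mul c w = gpd.r c := by
    have hside : gpd.d b = gpd.r (gpd.mul (gpd.inv b) (gpd.inv a)) := by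
      rw [gpd.r_mul _ _ (by rw [gpd.d_inv, hria]), gpd.r_inv]
    rw [hcdef, hwdef, gpd.assoc a b _ hc hside,
      mulInvCancel (gpd := gpd) hria.symm, gpd.mul_inv, hrc]
  have key : gpd.inv c = w := by
    have h5 : gpd.inv c = gpd.mul (gpd.inv c) (gpd.mul c w) := by
      rw [hcw, ← gpd.d_inv c, gpd.mul_d]
    rw [h5, ← gpd.assoc _ _ _ (gpd.d_inv c) (by rw [hdc, hrw]), gpd.inv_mul,
      hdc, ← hrw, gpd.r_mul_self]
  exact key

end GpdLemmas

end StGal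

namespace StGal
set_option linter.unusedSectionVars false

section SgCalc

open Finset

variable {K : Type*} [CommRing K] {R : Type*} [Ring R] [Algebra K R]
  {G : Type*} [Fintype G] {gpd : Gpd G} (β : GpdAct K R gpd)

/-- `σ_g(w) = β_g(w 1_{g⁻¹})`. -/
def sg (g : G) (w : R) : R := β.act g (w * β.one (gpd.inv g))

lemma sg_add (g : G) (a b : R) : sg β g (a + b) = sg β g a + sg β g b :=
  β.act_add g a b

lemma sg_zero (g : G) : sg β g 0 = 0 := by
  have h := sg_add β g 0 0
  rw [add_zero] at h
  exact add_eq_left.mp h.symm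

lemma sg_sum {ι : Type*} (g : G) (s : Finset ι) (f : ι → R) :
    sg β g (∑ i ∈ s, f i) = ∑ i ∈ s, sg β g (f i) := by
  classical
  induction s using Finset.induction with
  | empty => simp [sg_zero]
  | insert a s' hne ih =>
                     rw [Finset.sum_insert hne, Finset.sum_insert hne, sg_add, ih]

lemma sg_mul (g : G) (a b : R) : sg β g (a * b) = sg β g a * sg β g b :=
  β.act_mul g a b

lemma sg_one_right (g : G) (w : R) : sg β g w * β.one g = sg β g w :=
  β.act_mem g w

lemma one_sg_left (g : G) (w : R) : β.one g * sg β g w = sg β g w := by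
  rw [β.one_central, sg_one_right]

lemma sg_absorb (g : G) (w : R) : sg β g (w * β.one (gpd.inv g)) = sg β g w := by
  unfold sg
  rw [mul_assoc, β.one_idem]

lemma one_inv_eq_one_d (g : G) : β.one (gpd.inv g) = β.one (gpd.d g) := by
  rw [β.one_r (gpd.inv g), gpd.r_inv]

lemma sg_unit (g : G) : sg β g 1 = β.one g := by
  unfold sg
  rw [one_mul]
  exact β.act_unit g

lemma sg_comp {k g : G} (hc : gpd.d k = gpd.r g) (w : R) :
    sg β k (sg β g w) = sg β (gpd.mul k g) w := by
  have h1 : β.one (gpd.inv (gpd.mul k g)) = β.one (gpd.inv g) := by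
    rw [one_inv_eq_one_d, one_inv_eq_one_d, gpd.d_mul k g hc]
  unfold sg
  rw [h1]
  exact β.act_comp k g w hc

lemma sg_idts {e : G} (he : e ∈ gpd.idts) (w : R) : sg β e w = w * β.one e := by
  obtain ⟨a, rfl⟩ := he
  unfold sg
  rw [gpd.inv_d]
  exact β.act_id a w

lemma sg_inv_sg (g : G) (w : R) :
    sg β (gpd.inv g) (sg β g w) = w * β.one (gpd.inv g) := by
  rw [sg_comp β (by rw [gpd.d_inv]) w, gpd.inv_mul,
    sg_idts β (d_mem_idts gpd g), ← one_inv_eq_one_d]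

lemma sg_sg_inv (g : G) (w : R) :
    sg β g (sg β (gpd.inv g) w) = w * β.one g := by
  rw [sg_comp β (by rw [gpd.r_inv]) w, gpd.mul_inv,
    sg_idts β (r_mem_idts gpd g), ← β.one_r]

variable {β}

lemma one_ne_orth (hdec : IsDecomp gpd β) {g h : G} (hne : gpd.r g ≠ gpd.r h) :
    β.one g * β.one h = 0 := by
  rw [β.one_r g, β.one_r h]
  exact hdec.2 _ _ (r_mem_idts gpd g) (r_mem_idts gpd h) hne

lemma fixed_comm (hcen : fixedSet gpd β Set.univ = Set.center R) {w : R}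
    (hw : w ∈ fixedSet gpd β Set.univ) (u : R) : w * u = u * w := by
  rw [hcen] at hw
  exact (Semigroup.mem_center_iff.mp hw u).symm

lemma comm_fixed (hcen : fixedSet gpd β Set.univ = Set.center R) {w : R}
    (hw : ∀ u, w * u = u * w) : w ∈ fixedSet gpd β Set.univ := by
  rw [hcen]
  exact Semigroup.mem_center_iff.mpr fun g => (hw g).symm

lemma fixed_sg {w : R} (hw : w ∈ fixedSet gpd β Set.univ) (g : G) :
    sg β g w = w * β.one g := hw g (Set.mem_univ g)

lemma one_mem_fixed (hcen : fixedSet gpd β Set.univ = Set.center R) (k : G) :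
    β.one k ∈ fixedSet gpd β Set.univ :=
  comm_fixed hcen (β.one_central k)

lemma corner_death (hdec : IsDecomp gpd β)
    (hcen : fixedSet gpd β Set.univ = Set.center R) {g : G}
    (hne : gpd.d g ≠ gpd.r g) : β.one g = 0 := by
  have h1 := fixed_sg (one_mem_fixed hcen (gpd.d g)) g
  have h2 : sg β g (β.one (gpd.d g)) = β.one g := by
    unfold sg
    rw [one_inv_eq_one_d, β.one_idem, ← gpd.r_inv, ← β.one_r]
    exact β.act_unit g
  rw [h2, β.one_r g] at h1
  rw [β.one_r g, h1]
  exact hdec.2 _ _ (d_mem_idts gpd g) (r_mem_idts gpd g) hne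

lemma sg_central_mul {c : R} (hc : c ∈ fixedSet gpd β Set.univ) (g : G) (v : R) :
    sg β g (c * v) = c * sg β g v := by
  rw [sg_mul, fixed_sg hc, mul_assoc, one_sg_left]

lemma sg_mul_central {c : R} (hc : c ∈ fixedSet gpd β Set.univ) (g : G) (v : R) :
    sg β g (v * c) = sg β g v * c := by
  rw [sg_mul, fixed_sg hc, ← β.one_central, ← mul_assoc, sg_one_right]

lemma sum_one_idts (hdec : IsDecomp gpd β) :
    (∑ e ∈ univ.filter (· ∈ gpd.idts), β.one e) = 1 := by
  classical
  rw [Finset.sum_filter]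
  exact hdec.1

end SgCalc

end StGal

namespace StGal

set_option linter.unusedSectionVars false

section Core

open Finset

variable {K : Type*} [CommRing K] {R : Type*} [Ring R] [Algebra K R]
  {G : Type*} [Fintype G] [Nonempty G] {gpd : Gpd G} {β : GpdAct K R gpd}

/-- a Galois coordinate system in `σ` form. -/
abbrev IsGalSys (β : GpdAct K R gpd) {nn : ℕ} (x y : Fin nn → R) : Prop :=
  ∀ g : G, (∑ i, x i * sg β g (y i)) = if g ∈ gpd.idts then β.one g else 0

lemma sg_eq_zero_of_arg {k : G} {X : R} (hX : X * β.one (gpd.inv k) = 0) :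
    sg β k X = 0 := by
  rw [← sg_absorb β k X, hX, sg_zero]

lemma wide_univ : gpd.IsWide (Set.univ : Set G) :=
  ⟨⟨Set.univ_nonempty, fun _ _ => trivial, fun _ _ _ _ _ => trivial⟩,
    Set.subset_univ _⟩

/-- the partial trace over a subset `H` -/
noncomputable def trH (β : GpdAct K R gpd) (H : Set G) (w : R) : R :=
  ∑ h ∈ univ.filter (· ∈ H), sg β h w

lemma trH_add (H : Set G) (a b : R) :
    trH β H (a + b) = trH β H a + trH β H b := by
  unfold trH
  rw [← Finset.sum_add_distrib]
  exact Finset.sum_congr rfl fun h _ => sg_add β h a b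

lemma trH_mem_fixedSet (hdec : IsDecomp gpd β) {H : Set G} (hH : gpd.IsWide H) (w : R) :
    trH β H w ∈ fixedSet gpd β H := by
  intro k hk
  show sg β k (trH β H w) = trH β H w * β.one k
  have hL : sg β k (trH β H w)
      = ∑ h ∈ (univ.filter (· ∈ H)).filter (fun h => gpd.r h = gpd.d k),
          sg β (gpd.mul k h) w := by
    unfold trH
    rw [sg_sum]
    rw [← Finset.sum_filter_add_sum_filter_not (univ.filter (· ∈ H))
      (fun h => gpd.r h = gpd.d k)]
    have hz : ∀ h ∈ (univ.filter (· ∈ H)).filter (fun h => ¬ gpd.r h = gpd.d k),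
        sg β k (sg β h w) = 0 := by
      intro h hh
      simp only [Finset.mem_filter] at hh
      apply sg_eq_zero_of_arg
      rw [← sg_one_right β h w, one_inv_eq_one_d, mul_assoc]
      have : β.one h * β.one (gpd.d k) = 0 := by
        have h2 : β.one (gpd.d k) = β.one (gpd.r (gpd.d k)) := β.one_r _
        rw [h2]
        rw [β.one_r h]
        refine hdec.2 _ _ (r_mem_idts gpd h) ?_ ?_
        · rw [gpd.r_d]; exact d_mem_idts gpd k
        · rw [gpd.r_d]; exact hh.2
      rw [this, mul_zero]
    rw [Finset.sum_eq_zero hz, add_zero]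
    exact Finset.sum_congr rfl fun h hh => by
      simp only [Finset.mem_filter] at hh
      exact sg_comp β hh.2.symm w
  have hR : trH β H w * β.one k
      = ∑ m ∈ (univ.filter (· ∈ H)).filter (fun m => gpd.r m = gpd.r k),
          sg β m w := by
    unfold trH
    rw [Finset.sum_mul]
    rw [← Finset.sum_filter_add_sum_filter_not (univ.filter (· ∈ H))
      (fun m => gpd.r m = gpd.r k)]
    have hz : ∀ m ∈ (univ.filter (· ∈ H)).filter (fun m => ¬ gpd.r m = gpd.r k),
        sg β m w * β.one k = 0 := by
      intro m hm
      simp only [Finset.mem_filter] at hm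
      rw [← sg_one_right β m w, mul_assoc, one_ne_orth hdec hm.2, mul_zero]
    rw [Finset.sum_eq_zero hz, add_zero]
    refine Finset.sum_congr rfl fun m hm => ?_
    simp only [Finset.mem_filter] at hm
    rw [β.one_r k, ← hm.2, ← β.one_r m, sg_one_right]
  rw [hL, hR]
  refine Finset.sum_nbij' (fun h => gpd.mul k h) (fun m => gpd.mul (gpd.inv k) m)
    ?_ ?_ ?_ ?_ ?_
  · intro h hh
    simp only [Finset.mem_filter, Finset.mem_univ, true_and] at hh ⊢
    exact ⟨hH.1.2.2 k hk h hh.1 hh.2.symm, gpd.r_mul k h hh.2.symm⟩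
  · intro m hm
    simp only [Finset.mem_filter, Finset.mem_univ, true_and] at hm ⊢
    have hc : gpd.d (gpd.inv k) = gpd.r m := by rw [gpd.d_inv, hm.2]
    exact ⟨hH.1.2.2 _ (hH.1.2.1 k hk) m hm.1 hc,
      by rw [gpd.r_mul _ _ hc, gpd.r_inv]⟩
  · intro h hh
    simp only [Finset.mem_filter, Finset.mem_univ, true_and] at hh
    exact invMulCancel hh.2.symm
  · intro m hm
    simp only [Finset.mem_filter, Finset.mem_univ, true_and] at hm
    exact mulInvCancel hm.2.symm
  · intro h _
    rfl

variable {nn : ℕ} {x y : Fin nn → R}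

lemma xy_one_e (hgal : IsGalSys β x y) {e : G} (he : e ∈ gpd.idts) : (∑ i, x i * y i) * β.one e = β.one e := by
  have h := hgal e
  rw [if_pos he] at h
  calc (∑ i, x i * y i) * β.one e = ∑ i, x i * sg β e (y i) := by
        rw [Finset.sum_mul]
        exact Finset.sum_congr rfl fun i _ => by rw [mul_assoc, ← sg_idts β he (y i)]
    _ = β.one e := h

lemma xy_one (hdec : IsDecomp gpd β) (hgal : IsGalSys β x y) : (∑ i, x i * y i) = 1 := by
  have h1 : (∑ i, x i * y i) * (∑ e ∈ univ.filter (· ∈ gpd.idts), β.one e)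
      = ∑ e ∈ univ.filter (· ∈ gpd.idts), β.one e := by
    rw [Finset.mul_sum]
    refine Finset.sum_congr rfl fun e he => ?_
    simp only [Finset.mem_filter] at he
    exact xy_one_e hgal he.2
  rw [sum_one_idts hdec] at h1
  rw [mul_one] at h1
  exact h1

lemma LPF_H (hdec : IsDecomp gpd β) (hgal : IsGalSys β x y) {H : Set G} (hH : gpd.IsWide H) (r : R) :
    (∑ i, x i * trH β H (y i * r)) = r := by
  unfold trH
  have h1 : ∀ i, x i * (∑ h ∈ univ.filter (· ∈ H), sg β h (y i * r))
      = ∑ h ∈ univ.filter (· ∈ H), x i * (sg β h (y i) * sg β h r) := by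
    intro i
    rw [Finset.mul_sum]
    exact Finset.sum_congr rfl fun h _ => by rw [sg_mul]
  simp only [h1]
  rw [Finset.sum_comm]
  have h2 : ∀ h ∈ univ.filter (· ∈ H),
      (∑ i, x i * (sg β h (y i) * sg β h r))
        = if h ∈ gpd.idts then r * β.one h else 0 := by
    intro h _
    have h3 : (∑ i, x i * (sg β h (y i) * sg β h r))
        = (∑ i, x i * sg β h (y i)) * sg β h r := by
      rw [Finset.sum_mul]
      exact Finset.sum_congr rfl fun i _ => by rw [mul_assoc]
    rw [h3, hgal h]
    by_cases hh : h ∈ gpd.idts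
    · rw [if_pos hh, if_pos hh, sg_idts β hh, ← β.one_central, ← mul_assoc,
        β.one_idem, β.one_central]
    · rw [if_neg hh, if_neg hh, zero_mul]
  rw [Finset.sum_congr rfl h2]
  have h4 : ∑ h ∈ univ.filter (· ∈ H), (if h ∈ gpd.idts then r * β.one h else 0)
      = ∑ e ∈ univ.filter (· ∈ gpd.idts), r * β.one e := by
    rw [Finset.sum_filter, Finset.sum_filter]
    refine Finset.sum_congr rfl fun g _ => ?_
    by_cases hg : g ∈ gpd.idts
    · simp [hg, hH.2 hg]
    · simp [hg]
  rw [h4, ← Finset.mul_sum, sum_one_idts hdec, mul_one]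

lemma tr_mem_fixed_univ (hdec : IsDecomp gpd β) (w : R) : trH β Set.univ w ∈ fixedSet gpd β Set.univ :=
  trH_mem_fixedSet hdec wide_univ w

lemma LPF (hdec : IsDecomp gpd β) (hgal : IsGalSys β x y) (r : R) : (∑ i, x i * trH β Set.univ (y i * r)) = r :=
  LPF_H hdec hgal wide_univ r

lemma trH_univ (w : R) : trH β Set.univ w = ∑ g : G, sg β g w := by
  unfold trH
  refine Finset.sum_congr ?_ (fun _ _ => rfl)
  ext g
  simp

lemma sg_one_d (g : G) : sg β g (β.one (gpd.d g)) = β.one g := by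
  unfold sg
  rw [one_inv_eq_one_d β g, β.one_idem, ← one_inv_eq_one_d β g]
  exact β.act_unit g

lemma sgM (hdec : IsDecomp gpd β) (hgal : IsGalSys β x y) (g h : G) :
    (∑ i, sg β g (x i) * sg β h (y i)) = if g = h then β.one g else 0 := by
  by_cases hr : gpd.r g = gpd.r h
  · set m := gpd.mul (gpd.inv g) h with hm
    have hcomp : gpd.d (gpd.inv g) = gpd.r h := by rw [gpd.d_inv, hr]
    have hA : sg β (gpd.inv g) (∑ i, sg β g (x i) * sg β h (y i))
        = if m ∈ gpd.idts then β.one m else 0 := by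
      rw [sg_sum]
      have h5 : ∀ i, sg β (gpd.inv g) (sg β g (x i) * sg β h (y i))
          = x i * sg β m (y i) := by
        intro i
        have honem : β.one (gpd.inv g) = β.one m := by
          rw [β.one_r (gpd.inv g), β.one_r m, gpd.r_mul _ _ hcomp]
        rw [sg_mul, sg_inv_sg, sg_comp β hcomp, mul_assoc, honem, one_sg_left]
      rw [Finset.sum_congr rfl fun i _ => h5 i]
      exact hgal m
    have habs : (∑ i, sg β g (x i) * sg β h (y i)) * β.one g
        = ∑ i, sg β g (x i) * sg β h (y i) := by
      rw [Finset.sum_mul]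
      refine Finset.sum_congr rfl fun i _ => ?_
      rw [mul_assoc]
      congr 1
      rw [β.one_r g, hr, ← β.one_r h]
      exact sg_one_right β h (y i)
    have hrec : (∑ i, sg β g (x i) * sg β h (y i))
        = sg β g (if m ∈ gpd.idts then β.one m else 0) := by
      rw [← hA, sg_sg_inv, habs]
    by_cases hid : m ∈ gpd.idts
    · have hgh : h = g := eq_of_invMul_idts hr hid
      subst hgh
      have hmd : m = gpd.d h := by rw [hm, gpd.inv_mul]
      rw [hrec, if_pos hid, hmd, sg_one_d, if_pos rfl]
    · have hne : g ≠ h := by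
        intro hgh
        apply hid
        rw [hm, hgh, gpd.inv_mul]
        exact d_mem_idts gpd h
      rw [hrec, if_neg hid, sg_zero, if_neg hne]
  · have hz : ∀ i, sg β g (x i) * sg β h (y i) = 0 := by
      intro i
      rw [← sg_one_right β g (x i), ← one_sg_left β h (y i), mul_assoc,
        ← mul_assoc (β.one g), one_ne_orth hdec hr, zero_mul, mul_zero]
    rw [Finset.sum_eq_zero fun i _ => hz i, if_neg (fun hgh => hr (by rw [hgh]))]

lemma sgFI (hdec : IsDecomp gpd β) (hgal : IsGalSys β x y) (g : G) :
    (∑ i, sg β g (x i) * y i) = if g ∈ gpd.idts then β.one g else 0 := by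
  by_cases hid : g ∈ gpd.idts
  · rw [if_pos hid]
    have h1 : ∀ i, sg β g (x i) * y i = x i * y i * β.one g := by
      intro i
      rw [sg_idts β hid, mul_assoc, β.one_central, ← mul_assoc]
    rw [Finset.sum_congr rfl fun i _ => h1 i, ← Finset.sum_mul, xy_one_e hgal hid]
  · rw [if_neg hid]
    set d' := ∑ i, sg β g (x i) * y i with hd'
    have hkey : ∀ j, trH β Set.univ (y j * d') = 0 := by
      intro j
      unfold trH
      refine Finset.sum_eq_zero fun h _ => ?_
      rw [sg_mul, hd', sg_sum]
      have h2 : ∀ i, sg β h (sg β g (x i) * y i) = sg β h (sg β g (x i)) * sg β h (y i) :=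
        fun i => sg_mul β h _ _
      rw [Finset.sum_congr rfl fun i _ => h2 i]
      by_cases hc : gpd.d h = gpd.r g
      · have h3 : ∀ i, sg β h (sg β g (x i)) = sg β (gpd.mul h g) (x i) :=
          fun i => sg_comp β hc (x i)
        rw [Finset.sum_congr rfl fun i _ => by rw [h3 i], sgM hdec hgal]
        have hne : gpd.mul h g ≠ h := by
          intro he
          exact hid (by rw [eq_d_of_mul_eq hc he]; exact d_mem_idts gpd h)
        rw [if_neg hne, mul_zero]
      · have h3 : ∀ i, sg β h (sg β g (x i)) = 0 := by
          intro i
          apply sg_eq_zero_of_arg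
          rw [← sg_one_right β g (x i), one_inv_eq_one_d, mul_assoc]
          have h4 : β.one g * β.one (gpd.d h) = 0 := by
            have h5 : β.one (gpd.d h) = β.one (gpd.r (gpd.d h)) := β.one_r _
            rw [h5, β.one_r g]
            refine hdec.2 _ _ (r_mem_idts gpd g) ?_ ?_
            · rw [gpd.r_d]; exact d_mem_idts gpd h
            · rw [gpd.r_d]; exact fun hh => hc (hh.symm)
          rw [h4, mul_zero]
        rw [Finset.sum_congr rfl fun i _ => by rw [h3 i], Finset.sum_eq_zero
          (fun i _ => zero_mul _), mul_zero]
    have := LPF hdec hgal d'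
    rw [← this]
    exact Finset.sum_eq_zero fun j _ => by rw [hkey j, mul_zero]

lemma sgRPF (hdec : IsDecomp gpd β) (hgal : IsGalSys β x y) (r : R) : (∑ i, trH β Set.univ (r * x i) * y i) = r := by
  simp only [trH_univ]
  have h1 : ∀ i, (∑ g : G, sg β g (r * x i)) * y i
      = ∑ g : G, sg β g r * (sg β g (x i) * y i) := by
    intro i
    rw [Finset.sum_mul]
    refine Finset.sum_congr rfl fun g _ => by rw [sg_mul, mul_assoc]
  simp only [h1]
  rw [Finset.sum_comm]
  have h2 : ∀ g : G, (∑ i, sg β g r * (sg β g (x i) * y i))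
      = if g ∈ gpd.idts then r * β.one g else 0 := by
    intro g
    rw [← Finset.mul_sum, sgFI hdec hgal]
    by_cases hg : g ∈ gpd.idts
    · rw [if_pos hg, if_pos hg, sg_idts β hg, mul_assoc, β.one_idem]
    · rw [if_neg hg, if_neg hg, mul_zero]
  rw [Finset.sum_congr rfl fun g _ => h2 g, ← Finset.sum_filter, ← Finset.mul_sum,
    sum_one_idts hdec, mul_one]

end Core

end StGal

namespace StGal

set_option linter.unusedSectionVars false

section Core2

open Finset

variable {K : Type*} [CommRing K] {R : Type*} [Ring R] [Algebra K R]
  {G : Type*} [Fintype G] [Nonempty G] {gpd : Gpd G} {β : GpdAct K R gpd}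
  {nn : ℕ} {x y : Fin nn → R}

/-- package a biadditive map as a bundled bi-hom -/
def mk2 (f : R → R → R) (h1 : ∀ a a' b, f (a + a') b = f a b + f a' b)
    (h2 : ∀ a b b', f a (b + b') = f a b + f a b') : R →+ R →+ R :=
  AddMonoidHom.mk' (fun a => AddMonoidHom.mk' (f a) (h2 a))
    (fun a a' => AddMonoidHom.ext fun b => h1 a a' b)

@[simp] lemma mk2_apply (f : R → R → R) (h1 h2) (a b : R) :
    mk2 f h1 h2 a b = f a b := rfl

lemma recon_key (hdec : IsDecomp gpd β) (hgal : IsGalSys β x y)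
    {N : Type*} [AddCommGroup N] (φ : R →+ R →+ N)
    (hbal : ∀ u v s : R, s ∈ fixedSet gpd β Set.univ → φ (u * s) v = φ u (s * v))
    (p q : R) : φ p q = ∑ i, φ (x i) (trH β Set.univ (y i * p) * q) := by
  conv_lhs => rw [← LPF hdec hgal p]
  calc φ (∑ i, x i * trH β Set.univ (y i * p)) q
      = (∑ i, φ (x i * trH β Set.univ (y i * p))) q := by rw [map_sum]
    _ = ∑ i, φ (x i * trH β Set.univ (y i * p)) q := by
        rw [AddMonoidHom.finset_sum_apply]
    _ = ∑ i, φ (x i) (trH β Set.univ (y i * p) * q) :=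
        Finset.sum_congr rfl fun i _ =>
          hbal (x i) q _ (tr_mem_fixed_univ hdec (y i * p))

lemma recon_main (hdec : IsDecomp gpd β) (hgal : IsGalSys β x y)
    {N : Type*} [AddCommGroup N] (φ : R →+ R →+ N)
    (hbal : ∀ u v s : R, s ∈ fixedSet gpd β Set.univ → φ (u * s) v = φ u (s * v))
    {ι' : Type*} (u : Finset ι') (A B : ι' → R) :
    (∑ j ∈ u, φ (A j) (B j))
      = ∑ i, φ (x i) (∑ g : G, sg β g (y i) * (∑ j ∈ u, sg β g (A j) * B j)) := by
  have h1 : (∑ j ∈ u, φ (A j) (B j))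
      = ∑ i, φ (x i) (∑ j ∈ u, trH β Set.univ (y i * A j) * B j) := by
    rw [Finset.sum_congr rfl fun j _ => recon_key hdec hgal φ hbal (A j) (B j),
      Finset.sum_comm]
    exact Finset.sum_congr rfl fun i _ => (map_sum (φ (x i)) _ u).symm
  rw [h1]
  refine Finset.sum_congr rfl fun i _ => ?_
  congr 1
  have h2 : ∀ j ∈ u, trH β Set.univ (y i * A j) * B j
      = ∑ g : G, sg β g (y i) * (sg β g (A j) * B j) := by
    intro j _
    rw [trH_univ, Finset.sum_mul]
    exact Finset.sum_congr rfl fun g _ => by rw [sg_mul, mul_assoc]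
  rw [Finset.sum_congr rfl h2, Finset.sum_comm]
  exact Finset.sum_congr rfl fun g _ => by rw [Finset.mul_sum]

lemma recon (hdec : IsDecomp gpd β) (hgal : IsGalSys β x y)
    {N : Type*} [AddCommGroup N] (φ : R →+ R →+ N)
    (hbal : ∀ u v s : R, s ∈ fixedSet gpd β Set.univ → φ (u * s) v = φ u (s * v))
    {ι κ : Type*} (s : Finset ι) (t : Finset κ)
    (a b : ι → R) (a' b' : κ → R)
    (hcomp : ∀ g : G, (∑ j ∈ s, sg β g (a j) * b j) = ∑ l ∈ t, sg β g (a' l) * b' l) :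
    (∑ j ∈ s, φ (a j) (b j)) = ∑ l ∈ t, φ (a' l) (b' l) := by
  rw [recon_main hdec hgal φ hbal s a b, recon_main hdec hgal φ hbal t a' b']
  refine Finset.sum_congr rfl fun i _ => ?_
  congr 1
  exact Finset.sum_congr rfl fun g _ => by rw [hcomp g]

lemma Zmove (hdec : IsDecomp gpd β) (hgal : IsGalSys β x y)
    {N : Type*} [AddCommGroup N] (φ : R →+ R →+ N)
    (hbal : ∀ u v s : R, s ∈ fixedSet gpd β Set.univ → φ (u * s) v = φ u (s * v))
    (w : R) :
    (∑ i, φ (w * x i) (y i)) = ∑ i, φ (x i) (y i * w) := by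
  refine recon hdec hgal φ hbal univ univ _ _ _ _ (fun g => ?_)
  have hL : (∑ i, sg β g (w * x i) * y i)
      = sg β g w * (∑ i, sg β g (x i) * y i) := by
    rw [Finset.mul_sum]
    exact Finset.sum_congr rfl fun i _ => by rw [sg_mul, mul_assoc]
  have hR : (∑ i, sg β g (x i) * (y i * w))
      = (∑ i, sg β g (x i) * y i) * w := by
    rw [Finset.sum_mul]
    exact Finset.sum_congr rfl fun i _ => by rw [mul_assoc]
  rw [hL, hR, sgFI hdec hgal]
  by_cases hg : g ∈ gpd.idts
  · rw [if_pos hg, sg_idts β hg, mul_assoc, β.one_idem, β.one_central]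
  · rw [if_neg hg, mul_zero, zero_mul]

/-- the canonical projection onto `J_g` -/
def pj (β : GpdAct K R gpd) (x y : Fin nn → R) (g : G) (r : R) : R :=
  ∑ i, x i * r * sg β g (y i)

/-- the mirror projection -/
def et (β : GpdAct K R gpd) (x y : Fin nn → R) (g : G) (r : R) : R :=
  ∑ i, sg β g (x i) * r * y i

lemma pj_zero (g : G) : pj β x y g 0 = 0 := by
  unfold pj
  exact Finset.sum_eq_zero fun i _ => by rw [mul_zero, zero_mul]

lemma pj_radd (g : G) (a b : R) : pj β x y g (a + b) = pj β x y g a + pj β x y g b := by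
  unfold pj
  rw [← Finset.sum_add_distrib]
  exact Finset.sum_congr rfl fun i _ => by rw [mul_add, add_mul]

lemma pj_rsum {ι : Type*} (g : G) (u : Finset ι) (f : ι → R) :
    pj β x y g (∑ j ∈ u, f j) = ∑ j ∈ u, pj β x y g (f j) := by
  classical
  induction u using Finset.induction with
  | empty => simp [pj_zero]
  | insert a s' hne ih =>
                     rw [Finset.sum_insert hne, Finset.sum_insert hne, pj_radd, ih]

lemma pj_mem (hdec : IsDecomp gpd β) (hcen : fixedSet gpd β Set.univ = Set.center R)
    (hgal : IsGalSys β x y) (g : G) (r : R) :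
    pj β x y g r ∈ Jset gpd β g := by
  constructor
  · unfold pj
    rw [Finset.sum_mul]
    exact Finset.sum_congr rfl fun i _ => by rw [mul_assoc, sg_one_right]
  · intro w
    show pj β x y g r * sg β g w = w * pj β x y g r
    have hz := Zmove hdec hgal
      (mk2 (fun a b => a * r * sg β g b)
        (fun a a' b => by rw [add_mul, add_mul])
        (fun a b b' => by rw [sg_add, mul_add]))
      (by
        intro u v s hs
        simp only [mk2_apply]
        rw [sg_central_mul hs, ← mul_assoc, mul_assoc u s r,
          fixed_comm hcen hs r, ← mul_assoc]) w
    simp only [mk2_apply] at hz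
    have hL : (∑ i, w * x i * r * sg β g (y i)) = w * pj β x y g r := by
      unfold pj
      rw [Finset.mul_sum]
      exact Finset.sum_congr rfl fun i _ => by rw [← mul_assoc, ← mul_assoc]
    have hR : (∑ i, x i * r * sg β g (y i * w)) = pj β x y g r * sg β g w := by
      unfold pj
      rw [Finset.sum_mul]
      exact Finset.sum_congr rfl fun i _ => by rw [sg_mul, ← mul_assoc]
    rw [hL, hR] at hz
    exact hz.symm

lemma Jt_sg {g : G} {t : R} (ht : t ∈ Jset gpd β g) (w : R) :
    t * sg β g w = w * t := ht.2 w

lemma pj_of_mem (hdec : IsDecomp gpd β) (hgal : IsGalSys β x y)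
    {g : G} {t : R} (ht : t ∈ Jset gpd β g) (h : G) :
    pj β x y h t = if g = h then t else 0 := by
  unfold pj
  have h1 : ∀ i, x i * t * sg β h (y i) = t * (sg β g (x i) * sg β h (y i)) := by
    intro i
    rw [← Jt_sg ht (x i), mul_assoc]
  rw [Finset.sum_congr rfl fun i _ => h1 i, ← Finset.mul_sum, sgM hdec hgal g h]
  by_cases hgh : g = h
  · rw [if_pos hgh, if_pos hgh]; exact ht.1
  · rw [if_neg hgh, if_neg hgh, mul_zero]

lemma sum_pj (hdec : IsDecomp gpd β) (hcen : fixedSet gpd β Set.univ = Set.center R)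
    (hgal : IsGalSys β x y) (r : R) :
    (∑ g : G, pj β x y g r) = r := by
  unfold pj
  rw [Finset.sum_comm]
  have h1 : ∀ i, (∑ g : G, x i * r * sg β g (y i))
      = x i * trH β Set.univ (y i) * r := by
    intro i
    calc ∑ g : G, x i * r * sg β g (y i)
        = x i * r * ∑ g : G, sg β g (y i) := by rw [Finset.mul_sum]
      _ = x i * r * trH β Set.univ (y i) := by rw [trH_univ]
      _ = x i * (r * trH β Set.univ (y i)) := by rw [mul_assoc]
      _ = x i * (trH β Set.univ (y i) * r) := by
            rw [fixed_comm hcen (tr_mem_fixed_univ hdec (y i)) r]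
      _ = x i * trH β Set.univ (y i) * r := by rw [mul_assoc]
  rw [Finset.sum_congr rfl fun i _ => h1 i, ← Finset.sum_mul]
  have h2 : (∑ i, x i * trH β Set.univ (y i)) = 1 := by
    have h3 := LPF hdec hgal (1 : R)
    simpa using h3
  rw [h2, one_mul]

end Core2

end StGal

namespace StGal

set_option linter.unusedSectionVars false

section Core3

open Finset

variable {K : Type*} [CommRing K] {R : Type*} [Ring R] [Algebra K R]
  {G : Type*} [Fintype G] [Nonempty G] {gpd : Gpd G} {β : GpdAct K R gpd}
  {nn : ℕ} {x y : Fin nn → R}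

lemma one_et (g : G) (r : R) : β.one g * et β x y g r = et β x y g r := by
  unfold et
  rw [Finset.mul_sum]
  refine Finset.sum_congr rfl fun i _ => ?_
  rw [← mul_assoc, ← mul_assoc, one_sg_left]

lemma et_rel (hdec : IsDecomp gpd β) (hcen : fixedSet gpd β Set.univ = Set.center R)
    (hgal : IsGalSys β x y) (g : G) (r w : R) :
    sg β g w * et β x y g r = et β x y g r * w := by
  have hz := Zmove hdec hgal
    (mk2 (fun a b => sg β g a * r * b)
      (fun a a' b => by rw [sg_add, add_mul, add_mul])
      (fun a b b' => by rw [mul_add]))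
    (by
      intro u v s hs
      simp only [mk2_apply]
      rw [sg_mul_central hs, mul_assoc (sg β g u) s r, fixed_comm hcen hs r,
        ← mul_assoc (sg β g u) r s, mul_assoc (sg β g u * r) s v])
    w
  simp only [mk2_apply] at hz
  have hL : (∑ i, sg β g (w * x i) * r * y i) = sg β g w * et β x y g r := by
    unfold et
    rw [Finset.mul_sum]
    refine Finset.sum_congr rfl fun i _ => ?_
    rw [sg_mul, mul_assoc, mul_assoc, mul_assoc]
  have hR : (∑ i, sg β g (x i) * r * (y i * w)) = et β x y g r * w := by
    unfold et
    rw [Finset.sum_mul]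
    refine Finset.sum_congr rfl fun i _ => by rw [← mul_assoc]
  rw [hL, hR] at hz
  exact hz

lemma et_mem (hdec : IsDecomp gpd β) (hcen : fixedSet gpd β Set.univ = Set.center R)
    (hgal : IsGalSys β x y) (g : G) (r : R) :
    et β x y g r ∈ Jset gpd β (gpd.inv g) := by
  have hprop : ∀ w : R, et β x y g r * sg β (gpd.inv g) w = w * et β x y g r := by
    intro w
    have h1 := et_rel hdec hcen hgal g r (sg β (gpd.inv g) w)
    rw [sg_sg_inv, mul_assoc, one_et] at h1
    exact h1.symm
  refine ⟨?_, fun w => hprop w⟩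
  have h2 := hprop 1
  rw [sg_unit, one_mul] at h2
  exact h2

lemma sum_et (hdec : IsDecomp gpd β) (hcen : fixedSet gpd β Set.univ = Set.center R)
    (hgal : IsGalSys β x y) (r : R) :
    (∑ g : G, et β x y g r) = r := by
  unfold et
  rw [Finset.sum_comm]
  have h1 : ∀ i, (∑ g : G, sg β g (x i) * r * y i)
      = r * (trH β Set.univ (x i) * y i) := by
    intro i
    calc (∑ g : G, sg β g (x i) * r * y i)
        = (∑ g : G, sg β g (x i)) * r * y i := by rw [Finset.sum_mul, Finset.sum_mul]
      _ = trH β Set.univ (x i) * r * y i := by rw [trH_univ]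
      _ = r * trH β Set.univ (x i) * y i := by
          rw [fixed_comm hcen (tr_mem_fixed_univ hdec (x i)) r]
      _ = r * (trH β Set.univ (x i) * y i) := by rw [mul_assoc]
  rw [Finset.sum_congr rfl fun i _ => h1 i, ← Finset.mul_sum]
  have h2 : (∑ i, trH β Set.univ (x i) * y i) = 1 := by
    have h3 := sgRPF hdec hgal (1 : R)
    simpa using h3
  rw [h2, mul_one]

lemma et_inv_mem (hdec : IsDecomp gpd β) (hcen : fixedSet gpd β Set.univ = Set.center R)
    (hgal : IsGalSys β x y) (k : G) (r : R) :
    et β x y (gpd.inv k) r ∈ Jset gpd β k := by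
  have h := et_mem hdec hcen hgal (gpd.inv k) r
  rwa [gpd.inv_inv] at h

lemma pj_eq_et (hdec : IsDecomp gpd β) (hcen : fixedSet gpd β Set.univ = Set.center R)
    (hgal : IsGalSys β x y) (g : G) (r : R) :
    pj β x y g r = et β x y (gpd.inv g) r := by
  have hs : (∑ k : G, et β x y (gpd.inv k) r) = r := by
    conv_rhs => rw [← sum_et hdec hcen hgal r]
    exact Fintype.sum_equiv ⟨gpd.inv, gpd.inv, gpd.inv_inv, gpd.inv_inv⟩
      _ _ (fun k => rfl)
  calc pj β x y g r = pj β x y g (∑ k : G, et β x y (gpd.inv k) r) := by rw [hs]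
    _ = ∑ k : G, pj β x y g (et β x y (gpd.inv k) r) := pj_rsum g univ _
    _ = ∑ k : G, if k = g then et β x y (gpd.inv k) r else 0 :=
        Finset.sum_congr rfl fun k _ =>
          pj_of_mem hdec hgal (et_inv_mem hdec hcen hgal k r) g
    _ = et β x y (gpd.inv g) r := by
        rw [Finset.sum_ite_eq' univ g (fun k => et β x y (gpd.inv k) r),
          if_pos (Finset.mem_univ g)]

/-! J-calculus -/

lemma J_zero (g : G) : (0 : R) ∈ Jset gpd β g :=
  ⟨by rw [zero_mul], fun w => by rw [zero_mul, mul_zero]⟩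

lemma J_one_left {g : G} {t : R} (ht : t ∈ Jset gpd β g) :
    β.one (gpd.inv g) * t = t := by
  have h1 := ht.2 (β.one (gpd.inv g))
  have h2 : β.act g (β.one (gpd.inv g) * β.one (gpd.inv g)) = β.one g := by
    rw [β.one_idem]; exact β.act_unit g
  rw [h2, ht.1] at h1
  exact h1.symm

lemma J_cmul (hcen : fixedSet gpd β Set.univ = Set.center R) {g : G} {t c : R}
    (hc : c ∈ fixedSet gpd β Set.univ) (ht : t ∈ Jset gpd β g) :
    c * t ∈ Jset gpd β g := by
  constructor
  · rw [mul_assoc, ht.1]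
  · intro w
    rw [mul_assoc, ht.2 w, ← mul_assoc, fixed_comm hcen hc w, mul_assoc]

lemma J_cross (hdec : IsDecomp gpd β) {a b : G} {t u : R}
    (ht : t ∈ Jset gpd β a) (hu : u ∈ Jset gpd β b)
    (hne : gpd.r a ≠ gpd.d b) : t * u = 0 := by
  have h1 : β.one a * β.one (gpd.inv b) = 0 := by
    rw [one_inv_eq_one_d β b, β.one_r a, show β.one (gpd.d b) = β.one (gpd.r (gpd.d b)) from β.one_r _]
    refine hdec.2 _ _ (r_mem_idts gpd a) ?_ ?_
    · rw [gpd.r_d]; exact d_mem_idts gpd b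
    · rw [gpd.r_d]; exact hne
  calc t * u = (t * β.one a) * (β.one (gpd.inv b) * u) := by rw [ht.1, J_one_left hu]
    _ = t * (β.one a * β.one (gpd.inv b)) * u := by rw [mul_assoc, ← mul_assoc (β.one a), ← mul_assoc]
    _ = 0 := by rw [h1, mul_zero, zero_mul]

lemma J_prod {a b : G} {t u : R}
    (ht : t ∈ Jset gpd β a) (hu : u ∈ Jset gpd β b)
    (hc : gpd.d b = gpd.r a) : t * u ∈ Jset gpd β (gpd.mul b a) := by
  have hone : β.one (gpd.mul b a) = β.one b := by
    rw [β.one_r (gpd.mul b a), gpd.r_mul b a hc, ← β.one_r b]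
  constructor
  · rw [hone, mul_assoc, hu.1]
  · intro w
    show t * u * sg β (gpd.mul b a) w = w * (t * u)
    have h1 : sg β (gpd.mul b a) w = sg β b (sg β a w) := (sg_comp β hc w).symm
    rw [h1, mul_assoc, Jt_sg hu (sg β a w), ← mul_assoc, Jt_sg ht w, mul_assoc]

lemma J_nonloop (hdec : IsDecomp gpd β) (hcen : fixedSet gpd β Set.univ = Set.center R)
    {g : G} (hne : gpd.d g ≠ gpd.r g) {t : R} (ht : t ∈ Jset gpd β g) : t = 0 := by
  rw [← ht.1, corner_death hdec hcen hne, mul_zero]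

lemma J_e_comm {e : G} (he : e ∈ gpd.idts) {t : R} (ht : t ∈ Jset gpd β e)
    (u : R) : t * u = u * t := by
  have h1 : t * sg β e u = u * t := Jt_sg ht u
  rw [sg_idts β he] at h1
  calc t * u = t * β.one e * u := by rw [ht.1]
    _ = t * (β.one e * u) := by rw [mul_assoc]
    _ = t * (u * β.one e) := by rw [β.one_central]
    _ = u * t := h1

lemma J_e_fixed (hcen : fixedSet gpd β Set.univ = Set.center R)
    {e : G} (he : e ∈ gpd.idts) {t : R} (ht : t ∈ Jset gpd β e) :
    t ∈ fixedSet gpd β Set.univ :=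
  comm_fixed hcen (J_e_comm he ht)

lemma J_conj {g k : G} {t : R} (ht : t ∈ Jset gpd β g)
    (hloop : gpd.d g = gpd.r g) (hc : gpd.d k = gpd.r g) :
    sg β k t ∈ Jset gpd β (gpd.mul (gpd.mul k g) (gpd.inv k)) := by
  set m := gpd.mul (gpd.mul k g) (gpd.inv k) with hm
  have hdkg : gpd.d (gpd.mul k g) = gpd.r (gpd.inv k) := by
    rw [gpd.d_mul k g hc, gpd.r_inv, hloop, ← hc]
  have hrm : gpd.r m = gpd.r k := by
    rw [hm, gpd.r_mul _ _ hdkg, gpd.r_mul k g hc]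
  have honem : β.one m = β.one k := by
    rw [β.one_r m, hrm, ← β.one_r k]
  have hprop : ∀ w : R, sg β k t * sg β m w = w * sg β k t := by
    intro w
    have h1 : sg β m w = sg β k (sg β g (sg β (gpd.inv k) w)) := by
      rw [sg_comp β hc, sg_comp β hdkg]
    rw [h1, ← sg_mul, Jt_sg ht (sg β (gpd.inv k) w), sg_mul, sg_sg_inv,
      mul_assoc, one_sg_left]
  constructor
  · rw [honem]; exact sg_one_right β k t
  · exact fun w => hprop w

end Core3

end StGal

namespace StGal

set_option linter.unusedSectionVars false

section Core4

open Finset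

variable {K : Type*} [CommRing K] {R : Type*} [Ring R] [Algebra K R]
  {G : Type*} [Fintype G] [Nonempty G] {gpd : Gpd G} {β : GpdAct K R gpd}
  {nn : ℕ} {x y : Fin nn → R}

/-- the Casimir trace `λ(w) = Σ_i x_i w y_i` -/
def lam (x y : Fin nn → R) (w : R) : R := ∑ i, x i * w * y i

def kap (x y : Fin nn → R) : R := ∑ j, lam x y (x j) * y j

lemma lam_add (a b : R) : lam x y (a + b) = lam x y a + lam x y b := by
  unfold lam
  rw [← Finset.sum_add_distrib]
  exact Finset.sum_congr rfl fun i _ => by rw [mul_add, add_mul]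

lemma lam_rsum {ι : Type*} (u : Finset ι) (f : ι → R) :
    lam x y (∑ j ∈ u, f j) = ∑ j ∈ u, lam x y (f j) := by
  classical
  induction u using Finset.induction with
  | empty => simp [lam]
  | insert a s' hne ih =>
                     rw [Finset.sum_insert hne, Finset.sum_insert hne, lam_add, ih]

lemma lam_comm (hdec : IsDecomp gpd β) (hcen : fixedSet gpd β Set.univ = Set.center R)
    (hgal : IsGalSys β x y) (w r : R) : r * lam x y w = lam x y w * r := by
  have hz := Zmove hdec hgal
    (mk2 (fun a b => a * w * b)
      (fun a a' b => by rw [add_mul, add_mul])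
      (fun a b b' => by rw [mul_add]))
    (by
      intro u v s hs
      simp only [mk2_apply]
      rw [mul_assoc (u*s) w v, mul_assoc u s (w*v), ← mul_assoc s w v,
        fixed_comm hcen hs w, mul_assoc w s v, ← mul_assoc u w (s*v)])
    r
  simp only [mk2_apply] at hz
  have hL : (∑ i, r * x i * w * y i) = r * lam x y w := by
    unfold lam
    rw [Finset.mul_sum]
    exact Finset.sum_congr rfl fun i _ => by simp only [mul_assoc]
  have hR : (∑ i, x i * w * (y i * r)) = lam x y w * r := by
    unfold lam
    rw [Finset.sum_mul]
    exact Finset.sum_congr rfl fun i _ => by simp only [mul_assoc]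
  rw [hL, hR] at hz
  exact hz

lemma lam_fixed (hdec : IsDecomp gpd β) (hcen : fixedSet gpd β Set.univ = Set.center R)
    (hgal : IsGalSys β x y) (w : R) : lam x y w ∈ fixedSet gpd β Set.univ :=
  comm_fixed hcen fun u => (lam_comm hdec hcen hgal w u).symm

lemma lam_mulc (hcen : fixedSet gpd β Set.univ = Set.center R) {c : R}
    (hc : c ∈ fixedSet gpd β Set.univ) (w : R) :
    lam x y (w * c) = lam x y w * c := by
  unfold lam
  rw [Finset.sum_mul]
  refine Finset.sum_congr rfl fun i _ => ?_
  simp only [mul_assoc]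
  rw [fixed_comm hcen hc (y i)]

lemma lam_cmul (hcen : fixedSet gpd β Set.univ = Set.center R) {c : R}
    (hc : c ∈ fixedSet gpd β Set.univ) (w : R) :
    lam x y (c * w) = c * lam x y w := by
  unfold lam
  rw [Finset.mul_sum]
  refine Finset.sum_congr rfl fun i _ => ?_
  rw [← mul_assoc (x i) c w, ← fixed_comm hcen hc (x i)]
  simp only [mul_assoc]

lemma lam_one (hdec : IsDecomp gpd β) (hgal : IsGalSys β x y) :
    lam x y 1 = 1 := by
  unfold lam
  rw [Finset.sum_congr rfl fun i (_ : i ∈ univ) => by rw [mul_one]]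
  exact xy_one hdec hgal

lemma Pmap (hdec : IsDecomp gpd β) (hcen : fixedSet gpd β Set.univ = Set.center R)
    (hgal : IsGalSys β x y) (w : R) :
    (∑ j, lam x y (w * x j) * y j) = kap x y * w := by
  have hz := Zmove hdec hgal
    (mk2 (fun a b => lam x y a * b)
      (fun a a' b => by rw [lam_add, add_mul])
      (fun a b b' => by rw [mul_add]))
    (by
      intro u v s hs
      simp only [mk2_apply]
      rw [lam_mulc hcen hs, mul_assoc])
    w
  simp only [mk2_apply] at hz
  rw [hz]
  unfold kap
  rw [Finset.sum_mul]
  exact Finset.sum_congr rfl fun j _ => by rw [mul_assoc]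

lemma trH_zero (H : Set G) : trH β H (0 : R) = 0 := by
  unfold trH
  exact Finset.sum_eq_zero fun h _ => sg_zero β h

lemma trH_rsum {ι : Type*} (H : Set G) (u : Finset ι) (f : ι → R) :
    trH β H (∑ j ∈ u, f j) = ∑ j ∈ u, trH β H (f j) := by
  unfold trH
  rw [Finset.sum_congr rfl fun h (_ : h ∈ univ.filter (· ∈ H)) => sg_sum β h u f]
  exact Finset.sum_comm

lemma trU_cmul (H : Set G) {c : R} (hc : c ∈ fixedSet gpd β Set.univ) (w : R) :
    trH β H (c * w) = c * trH β H w := by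
  unfold trH
  rw [Finset.mul_sum]
  exact Finset.sum_congr rfl fun h _ => sg_central_mul hc h w

lemma pj_idts {e : G} (he : e ∈ gpd.idts) (r : R) :
    pj β x y e r = lam x y r * β.one e := by
  unfold pj lam
  rw [Finset.sum_mul]
  refine Finset.sum_congr rfl fun i _ => ?_
  rw [sg_idts β he, ← mul_assoc, mul_assoc (x i * r) (y i) (β.one e)]

lemma Omega (hdec : IsDecomp gpd β) (hcen : fixedSet gpd β Set.univ = Set.center R)
    (hgal : IsGalSys β x y) :
    (∑ i, lam x y (x i) * trH β Set.univ (y i)) = 1 := by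
  have h1 : ∀ i, lam x y (x i) * trH β Set.univ (y i)
      = lam x y (x i * trH β Set.univ (y i)) :=
    fun i => (lam_mulc hcen (tr_mem_fixed_univ hdec (y i)) (x i)).symm
  rw [Finset.sum_congr rfl fun i _ => h1 i, ← lam_rsum]
  have h2 : (∑ i, x i * trH β Set.univ (y i)) = 1 := by
    have h3 := LPF hdec hgal (1 : R)
    simpa using h3
  rw [h2]
  exact lam_one hdec hgal

lemma tr_kap (hdec : IsDecomp gpd β) (hcen : fixedSet gpd β Set.univ = Set.center R)
    (hgal : IsGalSys β x y) : trH β Set.univ (kap x y) = 1 := by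
  unfold kap
  rw [trH_rsum]
  rw [Finset.sum_congr rfl fun j (_ : j ∈ univ) =>
    trU_cmul Set.univ (lam_fixed hdec hcen hgal (x j)) (y j)]
  exact Omega hdec hcen hgal

lemma conj_not_idts {g k : G} (hloop : gpd.d g = gpd.r g)
    (hck : gpd.d k = gpd.r g) (hgid : g ∉ gpd.idts) :
    gpd.mul (gpd.mul k g) (gpd.inv k) ∉ gpd.idts := by
  intro hm
  set m := gpd.mul (gpd.mul k g) (gpd.inv k) with hmdef
  have hdkg : gpd.d (gpd.mul k g) = gpd.r (gpd.inv k) := by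
    rw [gpd.d_mul k g hck, gpd.r_inv, hloop, ← hck]
  have hrm : gpd.r m = gpd.r k := by
    rw [hmdef, gpd.r_mul _ _ hdkg, gpd.r_mul k g hck]
  have hmrk : m = gpd.r k := by rw [← r_of_idts hm, hrm]
  have hA1 : gpd.mul m k = k := by rw [hmrk, gpd.r_mul_self]
  have hA2 : gpd.mul (gpd.inv k) (gpd.mul m k) = gpd.d k := by
    rw [hA1, gpd.inv_mul]
  have hmk : gpd.mul m k = gpd.mul k g := by
    rw [hmdef, gpd.assoc _ _ _ hdkg (gpd.d_inv k), gpd.inv_mul]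
    have hdk : gpd.d (gpd.mul k g) = gpd.d k := by
      rw [gpd.d_mul k g hck, hloop, ← hck]
    rw [← hdk, gpd.mul_d]
  have hg : g = gpd.d k := by
    have h5 := hA2
    rw [hmk, invMulCancel hck] at h5
    exact h5
  exact hgid (hg ▸ d_mem_idts gpd k)

lemma trJ (hdec : IsDecomp gpd β) (hcen : fixedSet gpd β Set.univ = Set.center R)
    (hgal : IsGalSys β x y) {g : G} {t : R} (hgid : g ∉ gpd.idts)
    (ht : t ∈ Jset gpd β g) : trH β Set.univ t = 0 := by
  by_cases hloop : gpd.d g = gpd.r g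
  · have hpj : ∀ e ∈ gpd.idts, pj β x y e (trH β Set.univ t) = 0 := by
      intro e he
      rw [trH_univ, pj_rsum]
      refine Finset.sum_eq_zero fun k _ => ?_
      by_cases hck : gpd.d k = gpd.r g
      · have hmem := J_conj ht hloop hck
        rw [pj_of_mem hdec hgal hmem e]
        exact if_neg fun hme => conj_not_idts hloop hck hgid (by rw [hme]; exact he)
      · have hz : sg β k t = 0 := by
          apply sg_eq_zero_of_arg
          rw [← ht.1, mul_assoc]
          have h4 : β.one g * β.one (gpd.inv k) = 0 := by
            rw [one_inv_eq_one_d β k, β.one_r g,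
              show β.one (gpd.d k) = β.one (gpd.r (gpd.d k)) from β.one_r _]
            exact hdec.2 _ _ (r_mem_idts gpd g)
              (by rw [gpd.r_d]; exact d_mem_idts gpd k)
              (by rw [gpd.r_d]; exact fun hh => hck hh.symm)
          rw [h4, mul_zero]
        rw [hz, pj_zero]
    have hC : trH β Set.univ t ∈ fixedSet gpd β Set.univ := tr_mem_fixed_univ hdec t
    set c := trH β Set.univ t with hcdef
    have hce : ∀ e ∈ gpd.idts, c * β.one e = 0 := by
      intro e he
      have h2 : c * β.one e = pj β x y e c := by
        unfold pj
        have h3 : ∀ i, x i * c * sg β e (y i) = c * (x i * y i * β.one e) := by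
          intro i
          rw [sg_idts β he, ← fixed_comm hcen hC (x i)]
          simp only [mul_assoc]
        rw [Finset.sum_congr rfl fun i _ => h3 i, ← Finset.mul_sum,
          ← Finset.sum_mul, xy_one_e hgal he]
      rw [h2]
      exact hpj e he
    have h6 : c = c * 1 := (mul_one c).symm
    rw [h6, ← sum_one_idts hdec, Finset.mul_sum]
    refine Finset.sum_eq_zero fun e hef => ?_
    exact hce e (by simpa using (Finset.mem_filter.mp hef).2)
  · rw [J_nonloop hdec hcen hloop ht, trH_zero]

lemma lamkap (hdec : IsDecomp gpd β) (hcen : fixedSet gpd β Set.univ = Set.center R)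
    (hgal : IsGalSys β x y) :
    lam x y (kap x y) * trH β Set.univ 1 = 1 := by
  have h1 := tr_kap hdec hcen hgal
  conv_rhs => rw [← h1]
  conv_rhs => rw [← sum_pj hdec hcen hgal (kap x y)]
  rw [trH_rsum]
  have h2 : ∀ g : G, trH β Set.univ (pj β x y g (kap x y))
      = if g ∈ gpd.idts then lam x y (kap x y) * trH β Set.univ (β.one g) else 0 := by
    intro g
    by_cases hg : g ∈ gpd.idts
    · rw [if_pos hg, pj_idts hg,
        trU_cmul Set.univ (lam_fixed hdec hcen hgal (kap x y)) (β.one g)]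
    · rw [if_neg hg]
      exact trJ hdec hcen hgal hg (pj_mem hdec hcen hgal g (kap x y))
  rw [Finset.sum_congr rfl fun g _ => h2 g]
  rw [← Finset.sum_filter, ← Finset.mul_sum]
  have h7 : (∑ e ∈ univ.filter (· ∈ gpd.idts), trH β Set.univ (β.one e))
      = trH β Set.univ 1 := by
    rw [← trH_rsum, sum_one_idts hdec]
  rw [h7]

end Core4

end StGal

namespace StGal

set_option linter.unusedSectionVars false

section Core5

open Finset

variable {K : Type*} [CommRing K] {R : Type*} [Ring R] [Algebra K R]
  {G : Type*} [Fintype G] [Nonempty G] {gpd : Gpd G} {β : GpdAct K R gpd}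
  {nn : ℕ} {x y : Fin nn → R}

lemma pj_inv_eq_et (hdec : IsDecomp gpd β)
    (hcen : fixedSet gpd β Set.univ = Set.center R) (hgal : IsGalSys β x y)
    (h : G) (a : R) : pj β x y (gpd.inv h) a = et β x y h a := by
  rw [pj_eq_et hdec hcen hgal, gpd.inv_inv]

lemma full_key (hdec : IsDecomp gpd β)
    (hcen : fixedSet gpd β Set.univ = Set.center R) (hgal : IsGalSys β x y)
    (h : G) :
    (∑ k, pj β x y (gpd.inv h) (sg β h (trH β Set.univ 1) * x k) * pj β x y h (y k))
      = β.one h := by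
  set T := trH β Set.univ (1 : R) with hT
  have hTfix : T ∈ fixedSet gpd β Set.univ := tr_mem_fixed_univ hdec 1
  have step1 : ∀ k, pj β x y (gpd.inv h) (sg β h T * x k) * pj β x y h (y k)
      = ∑ i, ∑ j,
          sg β h (x i) * sg β h T * (x k * (y i * x j) * y k) * sg β h (y j) := by
    intro k
    rw [pj_inv_eq_et hdec hcen hgal]
    unfold et pj
    rw [Finset.sum_mul]
    refine Finset.sum_congr rfl fun i _ => ?_
    rw [Finset.mul_sum]
    refine Finset.sum_congr rfl fun j _ => ?_
    simp only [mul_assoc]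
  have step3 : ∀ (i j : Fin nn),
      sg β h (x i) * sg β h T * lam x y (y i * x j) * sg β h (y j)
        = sg β h (x i * T * (lam x y (y i * x j) * y j)) := by
    intro i j
    have hc : lam x y (y i * x j) ∈ fixedSet gpd β Set.univ :=
      lam_fixed hdec hcen hgal _
    rw [sg_mul β h (x i * T) (lam x y (y i * x j) * y j), sg_mul β h (x i) T,
      sg_central_mul hc h (y j)]
    simp only [mul_assoc]
  calc (∑ k, pj β x y (gpd.inv h) (sg β h T * x k) * pj β x y h (y k))
      = ∑ k, ∑ i, ∑ j,
          sg β h (x i) * sg β h T * (x k * (y i * x j) * y k) * sg β h (y j) :=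
        Finset.sum_congr rfl fun k _ => step1 k
    _ = ∑ i, ∑ k, ∑ j,
          sg β h (x i) * sg β h T * (x k * (y i * x j) * y k) * sg β h (y j) :=
        Finset.sum_comm
    _ = ∑ i, ∑ j,
          sg β h (x i) * sg β h T * lam x y (y i * x j) * sg β h (y j) := by
        refine Finset.sum_congr rfl fun i _ => ?_
        rw [Finset.sum_comm]
        refine Finset.sum_congr rfl fun j _ => ?_
        rw [show (∑ k, sg β h (x i) * sg β h T * (x k * (y i * x j) * y k)
              * sg β h (y j))
            = sg β h (x i) * sg β h T * (∑ k, x k * (y i * x j) * y k)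
              * sg β h (y j) from by rw [← Finset.sum_mul, ← Finset.mul_sum]]
        rfl
    _ = ∑ i, ∑ j, sg β h (x i * T * (lam x y (y i * x j) * y j)) :=
        Finset.sum_congr rfl fun i _ => Finset.sum_congr rfl fun j _ => step3 i j
    _ = sg β h (∑ i, ∑ j, x i * T * (lam x y (y i * x j) * y j)) := by
        rw [sg_sum]
        exact Finset.sum_congr rfl fun i _ => by rw [sg_sum]
    _ = sg β h (∑ i, x i * T * (kap x y * y i)) := by
        congr 1
        refine Finset.sum_congr rfl fun i _ => ?_
        rw [← Finset.mul_sum]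
        congr 1
        exact Pmap hdec hcen hgal (y i)
    _ = sg β h (lam x y (T * kap x y)) := by
        congr 1
        unfold lam
        exact Finset.sum_congr rfl fun i _ => by simp only [mul_assoc]
    _ = sg β h 1 := by
        rw [show T * kap x y = kap x y * T from fixed_comm hcen hTfix (kap x y),
          lam_mulc hcen hTfix (kap x y), lamkap hdec hcen hgal]
    _ = β.one h := sg_unit β h

lemma full_ann (hdec : IsDecomp gpd β)
    (hcen : fixedSet gpd β Set.univ = Set.center R) (hgal : IsGalSys β x y)
    {h : G} {δ : R} (hδ : ∀ b, pj β x y h b * δ = 0) : β.one h * δ = 0 := by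
  rw [← full_key hdec hcen hgal h, Finset.sum_mul]
  refine Finset.sum_eq_zero fun k _ => ?_
  rw [mul_assoc, hδ (y k), mul_zero]

end Core5

end StGal

namespace StGal

set_option linter.unusedSectionVars false

section Core6

open Finset

variable {K : Type*} [CommRing K] {R : Type*} [Ring R] [Algebra K R]
  {G : Type*} [Fintype G] [Nonempty G] {gpd : Gpd G} {β : GpdAct K R gpd}
  {nn : ℕ} {x y : Fin nn → R}

lemma sg_apply_eq {g : G} {s : R} (h : β.act g (s * β.one (gpd.inv g)) = s * β.one g) :
    sg β g s = s * β.one g := h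

lemma Hset_wide (S : Set R) : gpd.IsWide (Hset gpd β S) := by
  have hidts : gpd.idts ⊆ Hset gpd β S := by
    intro e he s _
    exact sg_idts β he s
  refine ⟨⟨?_, ?_, ?_⟩, hidts⟩
  · exact ⟨gpd.d (Classical.arbitrary G), hidts (d_mem_idts gpd _)⟩
  · intro g hg s hs
    have hg' : sg β g s = s * β.one g := hg s hs
    have h1 := congrArg (sg β (gpd.inv g)) hg'
    rw [sg_inv_sg] at h1
    have h2 : sg β (gpd.inv g) (s * β.one g) = sg β (gpd.inv g) s := by
      have h3 := sg_absorb β (gpd.inv g) s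
      rwa [gpd.inv_inv] at h3
    rw [h2] at h1
    exact h1.symm
  · intro g hg h' hh' hc s hs
    have h1 : sg β (gpd.mul g h') s = sg β g (sg β h' s) := (sg_comp β hc s).symm
    have h2 : sg β h' s = s * β.one h' := hh' s hs
    have h3 : β.one h' = β.one (gpd.inv g) := by
      rw [β.one_r h', ← hc, ← one_inv_eq_one_d β g]
    have h4 : β.one (gpd.mul g h') = β.one g := by
      rw [β.one_r (gpd.mul g h'), gpd.r_mul g h' hc, ← β.one_r g]
    have hg'' : sg β g s = s * β.one g := hg s hs
    show sg β (gpd.mul g h') s = s * β.one (gpd.mul g h')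
    rw [h1, h2, h3, sg_absorb, hg'', h4]

lemma J_comm_of_Hset {S : Set R} {g : G} (hg : g ∈ Hset gpd β S) {t : R}
    (ht : t ∈ Jset gpd β g) {s : R} (hs : s ∈ S) : t * s = s * t := by
  have h1 : t * sg β g s = s * t := Jt_sg ht s
  have h2 : sg β g s = s * β.one g := hg s hs
  rw [h2] at h1
  have h3 : t * (s * β.one g) = t * s := by
    rw [← β.one_central, ← mul_assoc, ht.1]
  rw [h3] at h1
  exact h1

lemma sum_pj_H (hdec : IsDecomp gpd β) (hgal : IsGalSys β x y)
    {H : Set G} (hH : gpd.IsWide H) {v : R}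
    (hcom : ∀ w : R, w ∈ fixedSet gpd β H → v * w = w * v) :
    (∑ h ∈ univ.filter (· ∈ H), pj β x y h v) = v := by
  unfold pj
  rw [Finset.sum_comm]
  have h1 : ∀ i, (∑ h ∈ univ.filter (· ∈ H), x i * v * sg β h (y i))
      = x i * trH β H (y i) * v := by
    intro i
    calc (∑ h ∈ univ.filter (· ∈ H), x i * v * sg β h (y i))
        = x i * (v * trH β H (y i)) := by
          unfold trH
          rw [Finset.mul_sum, Finset.mul_sum]
          exact Finset.sum_congr rfl fun h _ => by simp only [mul_assoc]
      _ = x i * (trH β H (y i) * v) := by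
          rw [hcom _ (trH_mem_fixedSet hdec hH (y i))]
      _ = x i * trH β H (y i) * v := by rw [mul_assoc]
  rw [Finset.sum_congr rfl fun i _ => h1 i, ← Finset.sum_mul]
  have h2 : (∑ i, x i * trH β H (y i)) = 1 := by
    have h3 := LPF_H hdec hgal hH (1 : R)
    simpa using h3
  rw [h2, one_mul]

end Core6

section Core6b

open Finset

variable {K : Type*} [CommRing K] {R : Type u} [Ring R] [Algebra K R]
  {G : Type*} [Fintype G] [Nonempty G] {gpd : Gpd G} {β : GpdAct K R gpd}

lemma fixed_Hset_eq (hFT2 : ∀ A : Subring R, fixedSet gpd β Set.univ ⊆ (A : Set R) →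
      SubSepOver.{u, v} A (fixedSet gpd β Set.univ) →
      ∃ H : Set G, gpd.IsWide H ∧ fixedSet gpd β H = (A : Set R))
    (X : Subring R) (hRX : fixedSet gpd β Set.univ ⊆ (X : Set R))
    (hsepX : SubSepOver.{u, v} X (fixedSet gpd β Set.univ)) :
    fixedSet gpd β (Hset gpd β (X : Set R)) = (X : Set R) := by
  obtain ⟨H₀, hw₀, hfix₀⟩ := hFT2 X hRX hsepX
  apply Set.Subset.antisymm
  · intro v hv
    rw [← hfix₀]
    intro h hh
    refine hv h ?_
    intro s hs
    have hsfix : s ∈ fixedSet gpd β H₀ := by rw [hfix₀]; exact hs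
    exact hsfix h hh
  · intro s hs g hg
    exact hg s hs

end Core6b

section Core7

open Finset

variable {K : Type*} [CommRing K] {R : Type*} [Ring R] [Algebra K R]
  {G : Type*} [Fintype G] [Nonempty G] {gpd : Gpd G} {β : GpdAct K R gpd}
  {nn : ℕ} {x y : Fin nn → R}

lemma mainDS (hdec : IsDecomp gpd β) (hcen : fixedSet gpd β Set.univ = Set.center R)
    (hgal : IsGalSys β x y) {S : Set R}
    (hfix : fixedSet gpd β (Hset gpd β S) = S) :
    IsDirectSumOver gpd β (Hset gpd β S) (Set.centralizer S) := by
  constructor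
  · intro f hfJ hfsupp s hs
    rw [Finset.sum_mul, Finset.mul_sum]
    refine Finset.sum_congr rfl fun g _ => ?_
    by_cases hg : g ∈ Hset gpd β S
    · exact (J_comm_of_Hset hg (hfJ g) hs).symm
    · rw [hfsupp g hg, zero_mul, mul_zero]
  · intro v hv
    have hvdec : (∑ h ∈ univ.filter (· ∈ Hset gpd β S), pj β x y h v) = v := by
      refine sum_pj_H hdec hgal (Hset_wide S) (fun w hw => ?_)
      have hwS : w ∈ S := by rw [← hfix]; exact hw
      exact (hv w hwS).symm
    have hvanish : ∀ g, g ∉ Hset gpd β S → pj β x y g v = 0 := by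
      intro g hg
      have h1 : pj β x y g v
          = pj β x y g (∑ h ∈ univ.filter (· ∈ Hset gpd β S), pj β x y h v) := by
        rw [hvdec]
      rw [h1, pj_rsum]
      refine Finset.sum_eq_zero fun k hk => ?_
      rw [pj_of_mem hdec hgal (pj_mem hdec hcen hgal k v) g]
      rw [if_neg fun hkg => hg (by rw [← hkg]; exact (Finset.mem_filter.mp hk).2)]
    refine ⟨fun g => if g ∈ Hset gpd β S then pj β x y g v else 0, ⟨?_, ?_, ?_⟩, ?_⟩
    · intro g
      show (if g ∈ Hset gpd β S then pj β x y g v else 0) ∈ Jset gpd β g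
      by_cases hg : g ∈ Hset gpd β S
      · rw [if_pos hg]; exact pj_mem hdec hcen hgal g v
      · rw [if_neg hg]; exact J_zero g
    · intro g hg
      show (if g ∈ Hset gpd β S then pj β x y g v else 0) = 0
      rw [if_neg hg]
    · show v = ∑ g : G, if g ∈ Hset gpd β S then pj β x y g v else 0
      rw [← Finset.sum_filter]
      exact hvdec.symm
    · rintro f' ⟨hf'J, hf'supp, hf'sum⟩
      funext g
      show f' g = if g ∈ Hset gpd β S then pj β x y g v else 0
      have hfg : f' g = pj β x y g v := by
        rw [hf'sum, pj_rsum]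
        rw [Finset.sum_congr rfl fun k (_ : k ∈ univ) =>
          pj_of_mem hdec hgal (hf'J k) g]
        rw [Finset.sum_ite_eq' univ g f', if_pos (Finset.mem_univ g)]
      by_cases hg : g ∈ Hset gpd β S
      · rw [if_pos hg]; exact hfg
      · rw [if_neg hg]; exact hf'supp g hg

end Core7

end StGal

namespace StGal

set_option linter.unusedSectionVars false

section Core8

open Finset

variable {K : Type*} [CommRing K] {R : Type*} [Ring R] [Algebra K R]
  {G : Type*} [Fintype G] [Nonempty G] {gpd : Gpd G} {β : GpdAct K R gpd}
  {nn : ℕ} {x y : Fin nn → R}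

lemma pj_mem_centralizer (hdec : IsDecomp gpd β)
    (hcen : fixedSet gpd β Set.univ = Set.center R) (hgal : IsGalSys β x y)
    {S : Set R} {h : G} (hh : h ∈ Hset gpd β S) (b : R) :
    pj β x y h b ∈ Set.centralizer S := by
  intro s hs
  exact (J_comm_of_Hset hh (pj_mem hdec hcen hgal h b) hs).symm

lemma fixed_of_ann (hdec : IsDecomp gpd β)
    (hcen : fixedSet gpd β Set.univ = Set.center R) (hgal : IsGalSys β x y)
    {h : G} {v : R}
    (hdzero : ∀ b, pj β x y h b * (sg β h v - v * β.one h) = 0) :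
    sg β h v = v * β.one h := by
  have h1 : β.one h * (sg β h v - v * β.one h) = 0 :=
    full_ann hdec hcen hgal hdzero
  have h2 : β.one h * (sg β h v - v * β.one h) = sg β h v - v * β.one h := by
    rw [mul_sub, one_sg_left]
    congr 1
    rw [β.one_central, mul_assoc, β.one_idem]
  rw [h2] at h1
  exact sub_eq_zero.mp h1

lemma doubleCent (hdec : IsDecomp gpd β)
    (hcen : fixedSet gpd β Set.univ = Set.center R) (hgal : IsGalSys β x y)
    {S : Set R} (hfix : fixedSet gpd β (Hset gpd β S) = S) :
    Set.centralizer (Set.centralizer S) = S := by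
  apply Set.Subset.antisymm
  · intro v hv
    rw [← hfix]
    intro h hh
    show sg β h v = v * β.one h
    refine fixed_of_ann hdec hcen hgal (fun b => ?_)
    have hcomm : pj β x y h b * v = v * pj β x y h b :=
      hv (pj β x y h b) (pj_mem_centralizer hdec hcen hgal hh b)
    rw [mul_sub, Jt_sg (pj_mem hdec hcen hgal h b) v, ← mul_assoc, hcomm,
      mul_assoc, (pj_mem hdec hcen hgal h b).1, sub_self]
  · intro s hs m hm
    exact (hm s hs).symm

end Core8

end StGal

namespace StGal

set_option linter.unusedSectionVars false

section Lagrange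

open Finset

variable {K : Type*} [CommRing K] {R : Type*} [Ring R] [Algebra K R]
  {G : Type*} [Fintype G] [Nonempty G] {gpd : Gpd G} {β : GpdAct K R gpd}
  {nn : ℕ} {x y : Fin nn → R}

lemma card_loops_dvd {e : G} (he : e ∈ gpd.idts) {H : Set G} (hH : gpd.IsWide H) :
    Nat.card {g : G // (gpd.d g = e ∧ gpd.r g = e) ∧ g ∈ H}
      ∣ Nat.card {g : G // gpd.d g = e ∧ gpd.r g = e} := by
  classical
  letI : Group {g : G // gpd.d g = e ∧ gpd.r g = e} :=
    { mul := fun a b => ⟨gpd.mul a.1 b.1,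
        by rw [gpd.d_mul _ _ (a.2.1.trans b.2.2.symm)]; exact b.2.1,
        by rw [gpd.r_mul _ _ (a.2.1.trans b.2.2.symm)]; exact a.2.2⟩
      one := ⟨e, d_of_idts he, r_of_idts he⟩
      inv := fun a => ⟨gpd.inv a.1,
        by rw [gpd.d_inv]; exact a.2.2, by rw [gpd.r_inv]; exact a.2.1⟩
      mul_assoc := fun a b c => Subtype.ext
        (gpd.assoc a.1 b.1 c.1 (a.2.1.trans b.2.2.symm) (b.2.1.trans c.2.2.symm))
      one_mul := fun a => Subtype.ext (by
        show gpd.mul e a.1 = a.1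
        have h3 := gpd.r_mul_self a.1
        rwa [a.2.2] at h3)
      mul_one := fun a => Subtype.ext (by
        show gpd.mul a.1 e = a.1
        have h3 := gpd.mul_d a.1
        rwa [a.2.1] at h3)
      inv_mul_cancel := fun a => Subtype.ext
        (by show gpd.mul (gpd.inv a.1) a.1 = e; rw [gpd.inv_mul, a.2.1]) }
  let Hsub : Subgroup {g : G // gpd.d g = e ∧ gpd.r g = e} :=
    { carrier := {a | a.1 ∈ H}
      mul_mem' := fun {a b} ha hb => hH.1.2.2 a.1 ha b.1 hb (a.2.1.trans b.2.2.symm)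
      one_mem' := hH.2 he
      inv_mem' := fun {a} ha => hH.1.2.1 a.1 ha }
  have h1 := Subgroup.card_subgroup_dvd_card Hsub
  have h2 : Nat.card ↥Hsub
      = Nat.card {g : G // (gpd.d g = e ∧ gpd.r g = e) ∧ g ∈ H} := by
    refine Nat.card_congr ⟨fun a => ⟨a.1.1, a.1.2, a.2⟩,
      fun b => ⟨⟨b.1, b.2.1⟩, b.2.2⟩, fun a => rfl, fun b => rfl⟩
  rwa [h2] at h1

lemma one_mul_one_corner (hdec : IsDecomp gpd β)
    (hcen : fixedSet gpd β Set.univ = Set.center R) {e : G} (he : e ∈ gpd.idts)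
    (g : G) :
    β.one g * β.one e = if gpd.d g = e ∧ gpd.r g = e then β.one e else 0 := by
  by_cases hr : gpd.r g = e
  · by_cases hdg : gpd.d g = gpd.r g
    · rw [if_pos ⟨hdg.trans hr, hr⟩, β.one_r g, hr, β.one_idem]
    · rw [if_neg (fun hc => hdg (hc.1.trans hc.2.symm)), corner_death hdec hcen hdg,
        zero_mul]
  · rw [if_neg (fun hc => hr hc.2), β.one_r g]
    exact hdec.2 _ _ (r_mem_idts gpd g) he hr

lemma tr_one_corner (hdec : IsDecomp gpd β)
    (hcen : fixedSet gpd β Set.univ = Set.center R) {e : G} (he : e ∈ gpd.idts) :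
    trH β Set.univ 1 * β.one e
      = (Nat.card {g : G // gpd.d g = e ∧ gpd.r g = e}) • β.one e := by
  rw [trH_univ, Finset.sum_mul]
  rw [Finset.sum_congr rfl fun g (_ : g ∈ univ) => by
    rw [sg_unit β g, one_mul_one_corner hdec hcen he g]]
  rw [← Finset.sum_filter, Finset.sum_const, Nat.card_eq_fintype_card,
    Fintype.card_subtype]

lemma trH_one_corner (hdec : IsDecomp gpd β)
    (hcen : fixedSet gpd β Set.univ = Set.center R) {e : G} (he : e ∈ gpd.idts)
    (H : Set G) :
    trH β H 1 * β.one e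
      = (Nat.card {g : G // (gpd.d g = e ∧ gpd.r g = e) ∧ g ∈ H}) • β.one e := by
  unfold trH
  rw [Finset.sum_mul, Finset.sum_filter]
  have h1 : ∀ g : G, (if g ∈ H then sg β g 1 * β.one e else 0)
      = if (gpd.d g = e ∧ gpd.r g = e) ∧ g ∈ H then β.one e else 0 := by
    intro g
    by_cases hg : g ∈ H
    · rw [if_pos hg, sg_unit β g, one_mul_one_corner hdec hcen he g]
      by_cases hc : gpd.d g = e ∧ gpd.r g = e
      · rw [if_pos hc, if_pos ⟨hc, hg⟩]
      · rw [if_neg hc, if_neg (fun hh => hc hh.1)]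
    · rw [if_neg hg, if_neg (fun hc => hg hc.2)]
  rw [Finset.sum_congr rfl fun g (_ : g ∈ univ) => h1 g, ← Finset.sum_filter,
    Finset.sum_const, Nat.card_eq_fintype_card, Fintype.card_subtype]

lemma fixed_mul {a b : R} (ha : a ∈ fixedSet gpd β Set.univ)
    (hb : b ∈ fixedSet gpd β Set.univ) : a * b ∈ fixedSet gpd β Set.univ := by
  intro g _
  show sg β g (a * b) = a * b * β.one g
  rw [sg_mul, fixed_sg ha, fixed_sg hb, mul_assoc, ← mul_assoc (β.one g),
    β.one_central, mul_assoc, β.one_idem, ← mul_assoc]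

lemma fixed_add {a b : R} (ha : a ∈ fixedSet gpd β Set.univ)
    (hb : b ∈ fixedSet gpd β Set.univ) : a + b ∈ fixedSet gpd β Set.univ := by
  intro g _
  show sg β g (a + b) = (a + b) * β.one g
  rw [sg_add, fixed_sg ha, fixed_sg hb, add_mul]

lemma fixed_zero : (0 : R) ∈ fixedSet gpd β Set.univ := by
  intro g _
  show sg β g 0 = 0 * β.one g
  rw [sg_zero, zero_mul]

lemma fixed_sum {ι : Type*} (u : Finset ι) (f : ι → R)
    (hf : ∀ j ∈ u, f j ∈ fixedSet gpd β Set.univ) :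
    (∑ j ∈ u, f j) ∈ fixedSet gpd β Set.univ := by
  classical
  induction u using Finset.induction with
  | empty => simpa using fixed_zero
  | insert a s' hne ih =>
      rw [Finset.sum_insert hne]
      exact fixed_add (hf a (Finset.mem_insert_self a s'))
        (ih fun j hj => hf j (Finset.mem_insert_of_mem hj))

lemma fixed_nsmul {a : R} (ha : a ∈ fixedSet gpd β Set.univ) (n : ℕ) :
    n • a ∈ fixedSet gpd β Set.univ := by
  induction n with
  | zero => simpa using fixed_zero
  | succ m ih => rw [succ_nsmul]; exact fixed_add ih ha

lemma nuinv (hdec : IsDecomp gpd β)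
    (hcen : fixedSet gpd β Set.univ = Set.center R) (hgal : IsGalSys β x y)
    {H : Set G} (hH : gpd.IsWide H) :
    ∃ ω : R, ω ∈ fixedSet gpd β Set.univ ∧ ω * trH β H 1 = 1 := by
  classical
  refine ⟨∑ e ∈ univ.filter (· ∈ gpd.idts),
    (Nat.card {g : G // gpd.d g = e ∧ gpd.r g = e} /
      Nat.card {g : G // (gpd.d g = e ∧ gpd.r g = e) ∧ g ∈ H}) •
      (lam x y (kap x y) * β.one e), ?_, ?_⟩
  · refine fixed_sum _ _ fun e _ => ?_
    exact fixed_nsmul (fixed_mul (lam_fixed hdec hcen hgal _) (one_mem_fixed hcen e)) _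
  · rw [Finset.sum_mul]
    have key : ∀ e ∈ univ.filter (· ∈ gpd.idts),
        ((Nat.card {g : G // gpd.d g = e ∧ gpd.r g = e} /
          Nat.card {g : G // (gpd.d g = e ∧ gpd.r g = e) ∧ g ∈ H}) •
          (lam x y (kap x y) * β.one e)) * trH β H 1 = β.one e := by
      intro e hef
      have he : e ∈ gpd.idts := by simpa using (Finset.mem_filter.mp hef).2
      set n1 := Nat.card {g : G // gpd.d g = e ∧ gpd.r g = e} with hn1
      set n0 := Nat.card {g : G // (gpd.d g = e ∧ gpd.r g = e) ∧ g ∈ H} with hn0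
      have hdvd : n0 ∣ n1 := card_loops_dvd he hH
      have hq : n0 * (n1 / n0) = n1 := Nat.mul_div_cancel' hdvd
      set L := lam x y (kap x y) with hL
      calc ((n1 / n0) • (L * β.one e)) * trH β H 1
          = (n1 / n0) • (L * (β.one e * trH β H 1)) := by
            rw [smul_mul_assoc, mul_assoc]
        _ = (n1 / n0) • (L * (trH β H 1 * β.one e)) := by rw [β.one_central]
        _ = (n1 / n0) • (L * (n0 • β.one e)) := by
            rw [trH_one_corner hdec hcen he H]
        _ = (n1 / n0) • (n0 • (L * β.one e)) := by rw [mul_smul_comm]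
        _ = ((n1 / n0) * n0) • (L * β.one e) := by rw [smul_smul]
        _ = n1 • (L * β.one e) := by rw [Nat.mul_comm, hq]
        _ = L * (n1 • β.one e) := by rw [mul_smul_comm]
        _ = L * (trH β Set.univ 1 * β.one e) := by rw [tr_one_corner hdec hcen he]
        _ = (L * trH β Set.univ 1) * β.one e := by rw [mul_assoc]
        _ = β.one e := by rw [hL, lamkap hdec hcen hgal, one_mul]
    rw [Finset.sum_congr rfl key]
    exact sum_one_idts hdec

end Lagrange

end StGal

namespace StGal

set_option linter.unusedSectionVars false

section SepCent

open Finset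

variable {K : Type*} [CommRing K] {R : Type u} [Ring R] [Algebra K R]
  {G : Type*} [Fintype G] [Nonempty G] {gpd : Gpd G} {β : GpdAct K R gpd}
  {nn : ℕ} {x y : Fin nn → R}

/-- the unnormalised Casimir components -/
noncomputable def uR (β : GpdAct K R gpd) (x y : Fin nn → R) (h : G) (k : Fin nn) : R :=
  pj β x y (gpd.inv h) (sg β h (trH β Set.univ 1) * x k)

noncomputable def vR (β : GpdAct K R gpd) (x y : Fin nn → R) (h : G) (k : Fin nn) : R :=
  pj β x y h (y k)

lemma uR_mem (hdec : IsDecomp gpd β) (hcen : fixedSet gpd β Set.univ = Set.center R)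
    (hgal : IsGalSys β x y) (h : G) (k : Fin nn) :
    uR β x y h k ∈ Jset gpd β (gpd.inv h) :=
  pj_mem hdec hcen hgal _ _

lemma vR_mem (hdec : IsDecomp gpd β) (hcen : fixedSet gpd β Set.univ = Set.center R)
    (hgal : IsGalSys β x y) (h : G) (k : Fin nn) :
    vR β x y h k ∈ Jset gpd β h :=
  pj_mem hdec hcen hgal _ _

lemma uv_sum (hdec : IsDecomp gpd β) (hcen : fixedSet gpd β Set.univ = Set.center R)
    (hgal : IsGalSys β x y) (h : G) :
    (∑ k, uR β x y h k * vR β x y h k) = β.one h :=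
  full_key hdec hcen hgal h

/-- the key reindexing step -/
lemma key_step (hdec : IsDecomp gpd β) (hcen : fixedSet gpd β Set.univ = Set.center R)
    (hgal : IsGalSys β x y) {m h : G} (hmloop : gpd.d m = gpd.r m)
    (hrh : gpd.r h = gpd.r m) (hdh : gpd.d h = gpd.r m)
    {t : R} (ht : t ∈ Jset gpd β m) (k : Fin nn) :
    t * uR β x y h k
      = ∑ l, uR β x y (gpd.mul (gpd.inv m) h) l
          * (vR β x y (gpd.mul (gpd.inv m) h) l * (t * uR β x y h k)) := by
  set g' := gpd.mul (gpd.inv m) h with hg'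
  have hcomp1 : gpd.d (gpd.inv m) = gpd.r h := by rw [gpd.d_inv, hrh]
  have hdg' : gpd.d g' = gpd.r m := by rw [hg', gpd.d_mul _ _ hcomp1, hdh]
  have hrg' : gpd.r g' = gpd.r m := by
    rw [hg', gpd.r_mul _ _ hcomp1, gpd.r_inv, hmloop]
  have hinvg' : gpd.inv g' = gpd.mul (gpd.inv h) m := by
    rw [hg', inv_mul_rev hcomp1, gpd.inv_inv]
  -- w := t * uR h k ∈ Jset (inv g')
  have hw : t * uR β x y h k ∈ Jset gpd β (gpd.inv g') := by
    rw [hinvg']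
    exact J_prod ht (uR_mem hdec hcen hgal h k)
      (by rw [gpd.d_inv, hrh])
  have habs : β.one g' * (t * uR β x y h k) = t * uR β x y h k := by
    have h1 := J_one_left hw
    rwa [gpd.inv_inv] at h1
  calc t * uR β x y h k = β.one g' * (t * uR β x y h k) := habs.symm
    _ = (∑ l, uR β x y g' l * vR β x y g' l) * (t * uR β x y h k) := by
        rw [uv_sum hdec hcen hgal g']
    _ = ∑ l, uR β x y g' l * (vR β x y g' l * (t * uR β x y h k)) := by
        rw [Finset.sum_mul]
        exact Finset.sum_congr rfl fun l _ => by rw [mul_assoc]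

lemma cmid_fixed (hdec : IsDecomp gpd β)
    (hcen : fixedSet gpd β Set.univ = Set.center R) (hgal : IsGalSys β x y)
    {m h : G} (hmloop : gpd.d m = gpd.r m)
    (hrh : gpd.r h = gpd.r m) (hdh : gpd.d h = gpd.r m)
    {t : R} (ht : t ∈ Jset gpd β m) (k : Fin nn) (l : Fin nn) :
    vR β x y (gpd.mul (gpd.inv m) h) l * (t * uR β x y h k)
      ∈ fixedSet gpd β Set.univ := by
  set g' := gpd.mul (gpd.inv m) h with hg'
  have hcomp1 : gpd.d (gpd.inv m) = gpd.r h := by rw [gpd.d_inv, hrh]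
  have hinvg' : gpd.inv g' = gpd.mul (gpd.inv h) m := by
    rw [hg', inv_mul_rev hcomp1, gpd.inv_inv]
  have hw : t * uR β x y h k ∈ Jset gpd β (gpd.inv g') := by
    rw [hinvg']
    exact J_prod ht (uR_mem hdec hcen hgal h k) (by rw [gpd.d_inv, hrh])
  have hprod : vR β x y g' l * (t * uR β x y h k)
      ∈ Jset gpd β (gpd.mul (gpd.inv g') g') :=
    J_prod (vR_mem hdec hcen hgal g' l) hw (gpd.d_inv g')
  rw [gpd.inv_mul] at hprod
  exact J_e_fixed hcen (d_mem_idts gpd g') hprod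

lemma csum_collapse (hdec : IsDecomp gpd β)
    (hcen : fixedSet gpd β Set.univ = Set.center R) (hgal : IsGalSys β x y)
    {m h : G} (hmloop : gpd.d m = gpd.r m)
    (hrh : gpd.r h = gpd.r m)
    {t : R} (ht : t ∈ Jset gpd β m) (g' : G) (l : Fin nn)
    (hrg' : gpd.r g' = gpd.r m) :
    (∑ k, vR β x y g' l * (t * uR β x y h k) * vR β x y h k)
      = vR β x y g' l * t := by
  have h1 : ∀ k, vR β x y g' l * (t * uR β x y h k) * vR β x y h k
      = vR β x y g' l * t * (uR β x y h k * vR β x y h k) := by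
    intro k
    simp only [mul_assoc]
  rw [Finset.sum_congr rfl fun k _ => h1 k, ← Finset.mul_sum,
    uv_sum hdec hcen hgal h]
  -- vR g' l * t * one h = vR g' l * t
  have h2 : t * β.one h = t := by
    rw [β.one_r h, hrh, ← β.one_r m, ht.1]
  rw [mul_assoc, h2]

end SepCent

end StGal

namespace StGal

set_option linter.unusedSectionVars false

section SepCent2

open Finset

variable {K : Type*} [CommRing K] {R : Type u} [Ring R] [Algebra K R]
  {G : Type*} [Fintype G] [Nonempty G] {gpd : Gpd G} {β : GpdAct K R gpd}
  {nn : ℕ} {x y : Fin nn → R}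

lemma fixed_mem_centralizer (hcen : fixedSet gpd β Set.univ = Set.center R)
    {c : R} (hc : c ∈ fixedSet gpd β Set.univ) (S : Set R) :
    c ∈ Subring.centralizer S := by
  rw [Subring.mem_centralizer_iff]
  exact fun m _ => (fixed_comm hcen hc m).symm

lemma J_mem_centralizer {S : Set R} {g : G} (hg : g ∈ Hset gpd β S) {t : R}
    (ht : t ∈ Jset gpd β g) : t ∈ Subring.centralizer S := by
  rw [Subring.mem_centralizer_iff]
  exact fun m hm => (J_comm_of_Hset hg ht hm).symm

/-- the bundled first Casimir family -/
noncomputable def XA (hdec : IsDecomp gpd β)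
    (hcen : fixedSet gpd β Set.univ = Set.center R) (hgal : IsGalSys β x y)
    (S : Set R) {ω : R} (hω : ω ∈ fixedSet gpd β Set.univ)
    (α : G × Fin nn) : Subring.centralizer S :=
  if hα : α.1 ∈ Hset gpd β S then
    ⟨ω * uR β x y α.1 α.2,
      mul_mem (fixed_mem_centralizer hcen hω S)
        (J_mem_centralizer ((Hset_wide S).1.2.1 α.1 hα)
          (uR_mem hdec hcen hgal α.1 α.2))⟩
  else 0

/-- the bundled second Casimir family -/
noncomputable def YA (hdec : IsDecomp gpd β)
    (hcen : fixedSet gpd β Set.univ = Set.center R) (hgal : IsGalSys β x y)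
    (S : Set R) (α : G × Fin nn) : Subring.centralizer S :=
  if hα : α.1 ∈ Hset gpd β S then
    ⟨vR β x y α.1 α.2, J_mem_centralizer hα (vR_mem hdec hcen hgal α.1 α.2)⟩
  else 0

lemma XA_coe (hdec : IsDecomp gpd β)
    (hcen : fixedSet gpd β Set.univ = Set.center R) (hgal : IsGalSys β x y)
    (S : Set R) {ω : R} (hω : ω ∈ fixedSet gpd β Set.univ) (α : G × Fin nn) :
    ((XA hdec hcen hgal S hω α : Subring.centralizer S) : R)
      = if α.1 ∈ Hset gpd β S then ω * uR β x y α.1 α.2 else 0 := by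
  unfold XA
  by_cases hα : α.1 ∈ Hset gpd β S
  · rw [dif_pos hα, if_pos hα]
  · rw [dif_neg hα, if_neg hα]
    rfl

lemma YA_coe (hdec : IsDecomp gpd β)
    (hcen : fixedSet gpd β Set.univ = Set.center R) (hgal : IsGalSys β x y)
    (S : Set R) (α : G × Fin nn) :
    ((YA hdec hcen hgal S α : Subring.centralizer S) : R)
      = if α.1 ∈ Hset gpd β S then vR β x y α.1 α.2 else 0 := by
  unfold YA
  by_cases hα : α.1 ∈ Hset gpd β S
  · rw [dif_pos hα, if_pos hα]
  · rw [dif_neg hα, if_neg hα]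
    rfl

lemma trH_one_eq (H : Set G) :
    trH β H (1 : R) = ∑ h ∈ univ.filter (· ∈ H), β.one h := by
  unfold trH
  exact Finset.sum_congr rfl fun h _ => sg_unit β h

lemma XY_sum (hdec : IsDecomp gpd β)
    (hcen : fixedSet gpd β Set.univ = Set.center R) (hgal : IsGalSys β x y)
    (S : Set R) {ω : R} (hω : ω ∈ fixedSet gpd β Set.univ)
    (hων : ω * trH β (Hset gpd β S) 1 = 1) :
    (∑ α : G × Fin nn, ((XA hdec hcen hgal S hω α : R) * (YA hdec hcen hgal S α : R)))
      = 1 := by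
  rw [Fintype.sum_prod_type]
  have h1 : ∀ h : G, (∑ k, ((XA hdec hcen hgal S hω (h, k) : R)
      * (YA hdec hcen hgal S (h, k) : R)))
      = if h ∈ Hset gpd β S then ω * β.one h else 0 := by
    intro h
    by_cases hh : h ∈ Hset gpd β S
    · rw [if_pos hh]
      have h2 : ∀ k : Fin nn, ((XA hdec hcen hgal S hω (h, k) : R)
          * (YA hdec hcen hgal S (h, k) : R))
          = ω * (uR β x y h k * vR β x y h k) := by
        intro k
        rw [XA_coe, YA_coe, if_pos hh, if_pos hh, mul_assoc]
      rw [Finset.sum_congr rfl fun k _ => h2 k, ← Finset.mul_sum,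
        uv_sum hdec hcen hgal h]
    · rw [if_neg hh]
      refine Finset.sum_eq_zero fun k _ => ?_
      rw [XA_coe, if_neg hh, zero_mul]
  rw [Finset.sum_congr rfl fun h _ => h1 h, ← Finset.sum_filter, ← Finset.mul_sum,
    ← trH_one_eq, hων]

end SepCent2

end StGal

namespace StGal

set_option linter.unusedSectionVars false

section SepCent3

open Finset

variable {K : Type*} [CommRing K] {R : Type u} [Ring R] [Algebra K R]
  {G : Type*} [Fintype G] [Nonempty G] {gpd : Gpd G} {β : GpdAct K R gpd}
  {nn : ℕ} {x y : Fin nn → R}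

lemma coeSum {S : Set R} {ι : Type*} (u : Finset ι)
    (f : ι → Subring.centralizer S) :
    ((∑ j ∈ u, f j : Subring.centralizer S) : R) = ∑ j ∈ u, (f j : R) :=
  map_sum (Subring.centralizer S).subtype f u

lemma cent_key (hdec : IsDecomp gpd β)
    (hcen : fixedSet gpd β Set.univ = Set.center R) (hgal : IsGalSys β x y)
    {S : Set R} {ω : R} (hω : ω ∈ fixedSet gpd β Set.univ)
    {N : Type v} [AddCommGroup N]
    (φ : Subring.centralizer S →+ Subring.centralizer S →+ N)
    (hbal : ∀ u v s : Subring.centralizer S,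
      (s : R) ∈ fixedSet gpd β Set.univ → φ (u * s) v = φ u (s * v))
    (t : Subring.centralizer S) {m : G} (hm : m ∈ Hset gpd β S)
    (htJ : (t : R) ∈ Jset gpd β m) :
    (∑ α : G × Fin nn, φ (t * XA hdec hcen hgal S hω α) (YA hdec hcen hgal S α))
      = ∑ α : G × Fin nn,
          φ (XA hdec hcen hgal S hω α) (YA hdec hcen hgal S α * t) := by
  classical
  by_cases hmloop : gpd.d m = gpd.r m
  swap
  · have ht0 : t = 0 := Subtype.ext (J_nonloop hdec hcen hmloop htJ)
    rw [ht0]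
    have hL : ∀ α ∈ (univ : Finset (G × Fin nn)),
        φ (0 * XA hdec hcen hgal S hω α) (YA hdec hcen hgal S α) = 0 :=
      fun α _ => by rw [zero_mul, map_zero, AddMonoidHom.zero_apply]
    have hR : ∀ α ∈ (univ : Finset (G × Fin nn)),
        φ (XA hdec hcen hgal S hω α) (YA hdec hcen hgal S α * 0) = 0 :=
      fun α _ => by rw [mul_zero, map_zero]
    rw [Finset.sum_eq_zero hL, Finset.sum_eq_zero hR]
  · set Λm := univ.filter
      (fun h => h ∈ Hset gpd β S ∧ gpd.r h = gpd.r m ∧ gpd.d h = gpd.r m)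
      with hΛm
    have hH := Hset_wide (gpd := gpd) (β := β) S
    have hXzero : ∀ h : G, h ∉ Hset gpd β S → ∀ k : Fin nn,
        XA hdec hcen hgal S hω (h, k) = 0 := by
      intro h hh k
      unfold XA
      exact dif_neg hh
    have hYzero : ∀ h : G, h ∉ Hset gpd β S → ∀ k : Fin nn,
        YA hdec hcen hgal S (h, k) = 0 := by
      intro h hh k
      unfold YA
      exact dif_neg hh
    have hLzero : ∀ h : G, h ∉ Λm →
        (∑ k, φ (t * XA hdec hcen hgal S hω (h, k)) (YA hdec hcen hgal S (h, k)))
          = 0 := by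
      intro h hh
      by_cases hhH : h ∈ Hset gpd β S
      · have hnc : ¬(gpd.r h = gpd.r m ∧ gpd.d h = gpd.r m) := by
          intro hc
          exact hh (Finset.mem_filter.mpr ⟨Finset.mem_univ _, hhH, hc.1, hc.2⟩)
        refine Finset.sum_eq_zero fun k _ => ?_
        have htu : (t : R) * uR β x y h k = 0 := by
          by_cases hra : gpd.r h = gpd.r m
          · have hdha : gpd.d h ≠ gpd.r m := fun hc => hnc ⟨hra, hc⟩
            have huz : uR β x y h k = 0 := by
              refine J_nonloop hdec hcen ?_ (uR_mem hdec hcen hgal h k)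
              rw [gpd.d_inv, gpd.r_inv]
              intro hc
              exact hdha (hc.symm.trans hra)
            rw [huz, mul_zero]
          · refine J_cross hdec htJ (uR_mem hdec hcen hgal h k) ?_
            rw [gpd.d_inv]
            exact fun hc => hra hc.symm
        have htX : t * XA hdec hcen hgal S hω (h, k) = 0 := by
          apply Subtype.ext
          rw [MulMemClass.coe_mul, ZeroMemClass.coe_zero,
            XA_coe hdec hcen hgal S hω (h, k), if_pos hhH, ← mul_assoc,
            ← fixed_comm hcen hω (t : R), mul_assoc, htu, mul_zero]
        rw [htX, map_zero, AddMonoidHom.zero_apply]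
      · refine Finset.sum_eq_zero fun k _ => ?_
        rw [hXzero h hhH k, mul_zero, map_zero, AddMonoidHom.zero_apply]
    have hRzero : ∀ h : G, h ∉ Λm →
        (∑ l, φ (XA hdec hcen hgal S hω (h, l)) (YA hdec hcen hgal S (h, l) * t))
          = 0 := by
      intro h hh
      by_cases hhH : h ∈ Hset gpd β S
      · have hnc : ¬(gpd.r h = gpd.r m ∧ gpd.d h = gpd.r m) := by
          intro hc
          exact hh (Finset.mem_filter.mpr ⟨Finset.mem_univ _, hhH, hc.1, hc.2⟩)
        refine Finset.sum_eq_zero fun l _ => ?_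
        have hvt : vR β x y h l * (t : R) = 0 := by
          by_cases hra : gpd.r h = gpd.r m
          · have hdha : gpd.d h ≠ gpd.r m := fun hc => hnc ⟨hra, hc⟩
            have hvz : vR β x y h l = 0 := by
              refine J_nonloop hdec hcen ?_ (vR_mem hdec hcen hgal h l)
              intro hc
              exact hdha (hc.trans hra)
            rw [hvz, zero_mul]
          · refine J_cross hdec (vR_mem hdec hcen hgal h l) htJ ?_
            rw [hmloop]
            exact hra
        have hYt : YA hdec hcen hgal S (h, l) * t = 0 := by
          apply Subtype.ext
          rw [MulMemClass.coe_mul, ZeroMemClass.coe_zero,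
            YA_coe hdec hcen hgal S (h, l), if_pos hhH, hvt]
        rw [hYt, map_zero]
      · refine Finset.sum_eq_zero fun l _ => ?_
        rw [hYzero h hhH l, zero_mul, map_zero]
    rw [Fintype.sum_prod_type, Fintype.sum_prod_type]
    rw [← Finset.sum_subset (Finset.subset_univ Λm) (fun h _ hh => hLzero h hh)]
    rw [← Finset.sum_subset (Finset.subset_univ Λm) (fun h _ hh => hRzero h hh)]
    refine Finset.sum_nbij' (fun h => gpd.mul (gpd.inv m) h)
      (fun h' => gpd.mul m h') ?_ ?_ ?_ ?_ ?_
    · intro h hhm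
      obtain ⟨-, hhH, hrh, hdh⟩ := Finset.mem_filter.mp hhm
      have hcomp1 : gpd.d (gpd.inv m) = gpd.r h := by rw [gpd.d_inv, hrh]
      refine Finset.mem_filter.mpr ⟨Finset.mem_univ _, ?_, ?_, ?_⟩
      · exact hH.1.2.2 _ (hH.1.2.1 m hm) h hhH hcomp1
      · rw [gpd.r_mul _ _ hcomp1, gpd.r_inv, hmloop]
      · rw [gpd.d_mul _ _ hcomp1, hdh]
    · intro h' hhm
      obtain ⟨-, hhH, hrh, hdh⟩ := Finset.mem_filter.mp hhm
      have hcomp1 : gpd.d m = gpd.r h' := by rw [hmloop, hrh]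
      refine Finset.mem_filter.mpr ⟨Finset.mem_univ _, ?_, ?_, ?_⟩
      · exact hH.1.2.2 m hm h' hhH hcomp1
      · rw [gpd.r_mul _ _ hcomp1]
      · rw [gpd.d_mul _ _ hcomp1, hdh]
    · intro h hhm
      obtain ⟨-, hhH, hrh, hdh⟩ := Finset.mem_filter.mp hhm
      exact mulInvCancel hrh.symm
    · intro h' hhm
      obtain ⟨-, hhH, hrh, hdh⟩ := Finset.mem_filter.mp hhm
      exact invMulCancel (by rw [hmloop, hrh])
    · intro h hhm
      obtain ⟨-, hhH, hrh, hdh⟩ := Finset.mem_filter.mp hhm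
      set g' := gpd.mul (gpd.inv m) h with hg'def
      have hcomp1 : gpd.d (gpd.inv m) = gpd.r h := by rw [gpd.d_inv, hrh]
      have hg'H : g' ∈ Hset gpd β S :=
        hH.1.2.2 _ (hH.1.2.1 m hm) h hhH hcomp1
      have hg'r : gpd.r g' = gpd.r m := by
        rw [hg'def, gpd.r_mul _ _ hcomp1, gpd.r_inv, hmloop]
      have hCfix : ∀ l k : Fin nn,
          vR β x y g' l * ((t : R) * uR β x y h k) ∈ fixedSet gpd β Set.univ :=
        fun l k => cmid_fixed hdec hcen hgal hmloop hrh hdh htJ k l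
      set C : Fin nn → Fin nn → Subring.centralizer S := fun l k =>
        ⟨vR β x y g' l * ((t : R) * uR β x y h k),
          fixed_mem_centralizer hcen (hCfix l k) S⟩ with hCdef
      have hins : ∀ k, t * XA hdec hcen hgal S hω (h, k)
          = ∑ l, XA hdec hcen hgal S hω (g', l) * C l k := by
        intro k
        apply Subtype.ext
        rw [MulMemClass.coe_mul, coeSum]
        rw [Finset.sum_congr rfl fun l (_ : l ∈ univ) => by
          rw [MulMemClass.coe_mul, XA_coe hdec hcen hgal S hω (g', l),
            if_pos hg'H]]
        rw [XA_coe hdec hcen hgal S hω (h, k), if_pos hhH]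
        have hRHS : (∑ l, ω * uR β x y g' l * (C l k : R))
            = ω * ((t : R) * uR β x y h k) := by
          rw [Finset.sum_congr rfl fun l (_ : l ∈ univ) => by
            rw [mul_assoc (ω) (uR β x y g' l) ((C l k : R))]]
          rw [← Finset.mul_sum]
          congr 1
          exact (key_step hdec hcen hgal hmloop hrh hdh htJ k).symm
        rw [hRHS, ← mul_assoc, ← fixed_comm hcen hω (t : R), mul_assoc]
      calc (∑ k, φ (t * XA hdec hcen hgal S hω (h, k)) (YA hdec hcen hgal S (h, k)))
          = ∑ k, ∑ l, φ (XA hdec hcen hgal S hω (g', l) * C l k)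
              (YA hdec hcen hgal S (h, k)) := by
            refine Finset.sum_congr rfl fun k _ => ?_
            rw [hins k, map_sum, AddMonoidHom.finset_sum_apply]
        _ = ∑ k, ∑ l, φ (XA hdec hcen hgal S hω (g', l))
              (C l k * YA hdec hcen hgal S (h, k)) := by
            refine Finset.sum_congr rfl fun k _ => Finset.sum_congr rfl fun l _ => ?_
            exact hbal _ _ (C l k) (hCfix l k)
        _ = ∑ l, ∑ k, φ (XA hdec hcen hgal S hω (g', l))
              (C l k * YA hdec hcen hgal S (h, k)) := Finset.sum_comm
        _ = ∑ l, φ (XA hdec hcen hgal S hω (g', l))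
              (∑ k, C l k * YA hdec hcen hgal S (h, k)) := by
            refine Finset.sum_congr rfl fun l _ => ?_
            exact (map_sum (φ (XA hdec hcen hgal S hω (g', l))) _ univ).symm
        _ = ∑ l, φ (XA hdec hcen hgal S hω (g', l))
              (YA hdec hcen hgal S (g', l) * t) := by
            refine Finset.sum_congr rfl fun l _ => ?_
            congr 1
            apply Subtype.ext
            rw [MulMemClass.coe_mul, coeSum]
            rw [Finset.sum_congr rfl fun k (_ : k ∈ univ) => by
              rw [MulMemClass.coe_mul, YA_coe hdec hcen hgal S (h, k), if_pos hhH]]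
            rw [YA_coe hdec hcen hgal S (g', l), if_pos hg'H]
            exact csum_collapse hdec hcen hgal hmloop hrh htJ g' l hg'r

end SepCent3

end StGal

namespace StGal

set_option linter.unusedSectionVars false

section SepCent4

open Finset

variable {K : Type*} [CommRing K] {R : Type u} [Ring R] [Algebra K R]
  {G : Type*} [Fintype G] [Nonempty G] {gpd : Gpd G} {β : GpdAct K R gpd}
  {nn : ℕ} {x y : Fin nn → R}

noncomputable def aPA (hdec : IsDecomp gpd β)
    (hcen : fixedSet gpd β Set.univ = Set.center R) (hgal : IsGalSys β x y)
    (S : Set R) (a : R) (m : G) : Subring.centralizer S :=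
  if hm : m ∈ Hset gpd β S then
    ⟨pj β x y m a, J_mem_centralizer hm (pj_mem hdec hcen hgal m a)⟩
  else 0

lemma aPA_coe (hdec : IsDecomp gpd β)
    (hcen : fixedSet gpd β Set.univ = Set.center R) (hgal : IsGalSys β x y)
    (S : Set R) (a : R) (m : G) :
    ((aPA hdec hcen hgal S a m : Subring.centralizer S) : R)
      = if m ∈ Hset gpd β S then pj β x y m a else 0 := by
  unfold aPA
  by_cases hm : m ∈ Hset gpd β S
  · rw [dif_pos hm, if_pos hm]
  · rw [dif_neg hm, if_neg hm]
    rfl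

lemma sepCentralizer (hdec : IsDecomp gpd β)
    (hcen : fixedSet gpd β Set.univ = Set.center R) (hgal : IsGalSys β x y)
    {S : Set R} (hfix : fixedSet gpd β (Hset gpd β S) = S) :
    SubSepOver.{u, v} (Subring.centralizer S) (fixedSet gpd β Set.univ) := by
  classical
  obtain ⟨ω, hω, hων⟩ := nuinv hdec hcen hgal (Hset_wide (gpd := gpd) (β := β) S)
  refine ⟨Fintype.card (G × Fin nn),
    fun i => XA hdec hcen hgal S hω ((Fintype.equivFin (G × Fin nn)).symm i),
    fun i => YA hdec hcen hgal S ((Fintype.equivFin (G × Fin nn)).symm i),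
    ?_, ?_⟩
  · have h1 : (∑ i : Fin (Fintype.card (G × Fin nn)),
        ((XA hdec hcen hgal S hω ((Fintype.equivFin (G × Fin nn)).symm i) : R)
          * (YA hdec hcen hgal S ((Fintype.equivFin (G × Fin nn)).symm i) : R)))
        = ∑ α : G × Fin nn,
            ((XA hdec hcen hgal S hω α : R) * (YA hdec hcen hgal S α : R)) :=
      Fintype.sum_equiv (Fintype.equivFin (G × Fin nn)).symm _ _ (fun i => rfl)
    rw [h1]
    exact XY_sum hdec hcen hgal S hω hων
  · intro N instN φ hbal a
    have haC : ∀ w ∈ S, w * (a : R) = (a : R) * w :=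
      Subring.mem_centralizer_iff.mp a.2
    have hadec : (∑ m ∈ univ.filter (· ∈ Hset gpd β S), pj β x y m (a : R))
        = (a : R) :=
      sum_pj_H hdec hgal (Hset_wide S)
        (fun w hw => (haC w (by rw [← hfix]; exact hw)).symm)
    have hasum : a = ∑ m : G, aPA hdec hcen hgal S (a : R) m := by
      apply Subtype.ext
      rw [coeSum]
      rw [Finset.sum_congr rfl fun m (_ : m ∈ univ) =>
        aPA_coe hdec hcen hgal S (a : R) m]
      rw [← Finset.sum_filter]
      exact hadec.symm
    have hτ : (∑ α : G × Fin nn,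
          φ (a * XA hdec hcen hgal S hω α) (YA hdec hcen hgal S α))
        = ∑ α : G × Fin nn,
            φ (XA hdec hcen hgal S hω α) (YA hdec hcen hgal S α * a) := by
      conv_lhs => rw [hasum]
      conv_rhs => rw [hasum]
      have h2 : ∀ α : G × Fin nn,
          φ ((∑ m : G, aPA hdec hcen hgal S (a : R) m) * XA hdec hcen hgal S hω α)
            (YA hdec hcen hgal S α)
          = ∑ m : G, φ (aPA hdec hcen hgal S (a : R) m * XA hdec hcen hgal S hω α)
              (YA hdec hcen hgal S α) := by
        intro α
        rw [Finset.sum_mul, map_sum, AddMonoidHom.finset_sum_apply]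
      have h3 : ∀ α : G × Fin nn,
          φ (XA hdec hcen hgal S hω α)
            (YA hdec hcen hgal S α * (∑ m : G, aPA hdec hcen hgal S (a : R) m))
          = ∑ m : G, φ (XA hdec hcen hgal S hω α)
              (YA hdec hcen hgal S α * aPA hdec hcen hgal S (a : R) m) := by
        intro α
        rw [Finset.mul_sum, map_sum]
      rw [Finset.sum_congr rfl fun α _ => h2 α,
        Finset.sum_congr rfl fun α _ => h3 α, Finset.sum_comm]
      rw [show (∑ α : G × Fin nn, ∑ m : G, φ (XA hdec hcen hgal S hω α)
          (YA hdec hcen hgal S α * aPA hdec hcen hgal S (a : R) m))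
        = ∑ m : G, ∑ α : G × Fin nn, φ (XA hdec hcen hgal S hω α)
          (YA hdec hcen hgal S α * aPA hdec hcen hgal S (a : R) m)
        from Finset.sum_comm]
      refine Finset.sum_congr rfl fun m _ => ?_
      by_cases hm : m ∈ Hset gpd β S
      · have haPJ : ((aPA hdec hcen hgal S (a : R) m : R)) ∈ Jset gpd β m := by
          rw [aPA_coe, if_pos hm]
          exact pj_mem hdec hcen hgal m (a : R)
        exact cent_key hdec hcen hgal hω φ hbal _ hm haPJ
      · have h0 : aPA hdec hcen hgal S (a : R) m = 0 := by
          unfold aPA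
          exact dif_neg hm
        rw [h0]
        have hL : ∀ α ∈ (univ : Finset (G × Fin nn)),
            φ (0 * XA hdec hcen hgal S hω α) (YA hdec hcen hgal S α) = 0 :=
          fun α _ => by rw [zero_mul, map_zero, AddMonoidHom.zero_apply]
        have hR : ∀ α ∈ (univ : Finset (G × Fin nn)),
            φ (XA hdec hcen hgal S hω α) (YA hdec hcen hgal S α * 0) = 0 :=
          fun α _ => by rw [mul_zero, map_zero]
        rw [Finset.sum_eq_zero hL, Finset.sum_eq_zero hR]
    calc (∑ i : Fin (Fintype.card (G × Fin nn)),
          φ (a * XA hdec hcen hgal S hω ((Fintype.equivFin (G × Fin nn)).symm i))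
            (YA hdec hcen hgal S ((Fintype.equivFin (G × Fin nn)).symm i)))
        = ∑ α : G × Fin nn,
            φ (a * XA hdec hcen hgal S hω α) (YA hdec hcen hgal S α) :=
          Fintype.sum_equiv (Fintype.equivFin (G × Fin nn)).symm _ _ (fun i => rfl)
      _ = ∑ α : G × Fin nn,
            φ (XA hdec hcen hgal S hω α) (YA hdec hcen hgal S α * a) := hτ
      _ = ∑ i : Fin (Fintype.card (G × Fin nn)),
            φ (XA hdec hcen hgal S hω ((Fintype.equivFin (G × Fin nn)).symm i))
              (YA hdec hcen hgal S ((Fintype.equivFin (G × Fin nn)).symm i) * a) :=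
          (Fintype.sum_equiv (Fintype.equivFin (G × Fin nn)).symm _ _
            (fun i => rfl)).symm

end SepCent4

end StGal
/-- Theorem 4.1: if `R` is a central `β`-Galois algebra satisfying
the fundamental theorem, then for any subalgebra `S` of `R` separable over `R^β`,
`V_R(S) = ⊕_{g ∈ H_S} J_g` and `S = ⊕_{g ∈ H_{S'}} J_g`, where `S' = V_R(S)`. -/
theorem directSum_of_fundamental_theorem {K : Type*} [CommRing K] {R : Type u}
    [Ring R] [Algebra K R] {G : Type*} [Fintype G] [Nonempty G]
    (gpd : Gpd G) (β : GpdAct K R gpd)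
    (hdec : IsDecomp gpd β) (hgal : IsGaloisExt gpd β)
    (hcen : fixedSet gpd β Set.univ = Set.center R)
    (hFT : SatisfiesFT.{u, v} gpd β)
    (S : Subring R) (hRS : fixedSet gpd β Set.univ ⊆ (S : Set R))
    (hsep : SubSepOver.{u, v} S (fixedSet gpd β Set.univ)) :
    IsDirectSumOver gpd β (Hset gpd β (S : Set R))
      (Set.centralizer (S : Set R)) ∧
    IsDirectSumOver gpd β (Hset gpd β (Set.centralizer (S : Set R)))
      (S : Set R) := by
  obtain ⟨n, x, y, hgal'⟩ := hgal
  have hgs : StGal.IsGalSys β x y := hgal'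
  have hfixS : fixedSet gpd β (Hset gpd β (S : Set R)) = (S : Set R) :=
    StGal.fixed_Hset_eq hFT.2.2 S hRS hsep
  have part1 : IsDirectSumOver gpd β (Hset gpd β (S : Set R))
      (Set.centralizer (S : Set R)) :=
    StGal.mainDS hdec hcen hgs hfixS
  have hsep' : SubSepOver.{u, v} (Subring.centralizer (S : Set R))
      (fixedSet gpd β Set.univ) :=
    StGal.sepCentralizer hdec hcen hgs hfixS
  have hRs' : fixedSet gpd β Set.univ ⊆ (Subring.centralizer (S : Set R) : Set R) :=
    fun c hc => StGal.fixed_mem_centralizer hcen hc _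
  have hfixS' : fixedSet gpd β
        (Hset gpd β (Subring.centralizer (S : Set R) : Set R))
      = (Subring.centralizer (S : Set R) : Set R) :=
    StGal.fixed_Hset_eq hFT.2.2 _ hRs' hsep'
  have hDC : Set.centralizer (Set.centralizer (S : Set R)) = (S : Set R) :=
    StGal.doubleCent hdec hcen hgs hfixS
  have part2 : IsDirectSumOver gpd β
      (Hset gpd β (Subring.centralizer (S : Set R) : Set R))
      (Set.centralizer (Subring.centralizer (S : Set R) : Set R)) :=
    StGal.mainDS hdec hcen hgs hfixS'
  rw [Subring.coe_centralizer] at part2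
  rw [hDC] at part2
  exact ⟨part1, part2⟩
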